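/- Every vertex-transitive intrinsic simplicial complex that is CAT(0) with the equilateral flat metric is a single simplex. -/

import Mathlib

open scoped RealInnerProductSpace

namespace MGC



/-! ## Generic collapsibility on posets -/

section Collapse

variable {α : Type*} [PartialOrder α]

/-- `σ` is a free face of `K` with unique proper coface `τ`. -/
def IsFreePair (K : Set α) (σ τ : α) : Prop :=
  σ ∈ K ∧ τ ∈ K ∧ σ < τ ∧ ∀ ρ ∈ K, σ < ρ → ρ = τ

/-- An elementary collapse removes a free face together with its unique coface. -/
def ElemCollapse (K L : Set α) : Prop :=
  ∃ σ τ, IsFreePair K σ τ ∧ L = K \ {σ, τ}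

/-- `K` collapses onto `L` by a sequence of elementary collapses. -/
def CollapsesTo : Set α → Set α → Prop := Relation.ReflTransGen ElemCollapse

/-- `σ` is an inclusion-maximal face (facet) of `K`. -/
def IsMaxFace (K : Set α) (σ : α) : Prop := σ ∈ K ∧ ∀ τ ∈ K, σ ≤ τ → τ = σ

/-- Combinatorial equivalence: an isomorphism of face posets. -/
def CombEquiv {β : Type*} [PartialOrder β] (K : Set α) (L : Set β) : Prop :=
  ∃ φ : α → β, Set.BijOn φ K L ∧ ∀ x ∈ K, ∀ y ∈ K, (x ≤ y ↔ φ x ≤ φ y)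

end Collapse

/-- A complex of subsets of `X` is collapsible if it collapses onto a single vertex. -/
def CollapsibleSet {X : Type*} (K : Set (Set X)) : Prop := ∃ x : X, CollapsesTo K {{x}}

/-- A complex of finite subsets of `V` is collapsible if it collapses onto a single vertex. -/
def CollapsibleFin {V : Type*} (K : Set (Finset V)) : Prop := ∃ v : V, CollapsesTo K {{v}}

/-! ## Geodesics and CAT(k) spaces -/

section MetricGeom

variable {X : Type*} [MetricSpace X]

/-- A geodesic segment from `x` to `y`, affinely parametrized on `[0,1]`. -/
def IsGeodSeg (γ : ℝ → X) (x y : X) : Prop :=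
  γ 0 = x ∧ γ 1 = y ∧
    ∀ s ∈ Set.Icc (0:ℝ) 1, ∀ t ∈ Set.Icc (0:ℝ) 1, dist (γ s) (γ t) = |s - t| * dist x y

/-- A subset is (geodesically) convex if any two of its points are joined by a geodesic
segment of the ambient space lying entirely in the subset. -/
def MetricConvexSet (A : Set X) : Prop :=
  ∀ x ∈ A, ∀ y ∈ A, ∃ γ : ℝ → X, IsGeodSeg γ x y ∧ ∀ t ∈ Set.Icc (0:ℝ) 1, γ t ∈ A

end MetricGeom

/-- Inverse hyperbolic cosine. -/
noncomputable def arcosh (u : ℝ) : ℝ := Real.log (u + Real.sqrt (u ^ 2 - 1))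

/-- The distance, in the model plane of constant curvature `k`, between the third vertex of a
comparison triangle with side lengths `a = |yz|`, `b = |xz|`, `c = |xy|` and the point lying on
the side `[x,y]` at distance `t * c` from `x` (law of cosines in constant curvature `k`). -/
noncomputable def cmpDist (k a b c t : ℝ) : ℝ :=
  if k = 0 then
    Real.sqrt (b ^ 2 + t ^ 2 * c ^ 2 - t * (b ^ 2 + c ^ 2 - a ^ 2))
  else if 0 < k then
    (Real.sqrt k)⁻¹ * Real.arccos
      (Real.cos (Real.sqrt k * b) * Real.cos (Real.sqrt k * (t * c)) +
        Real.sin (Real.sqrt k * b) * Real.sin (Real.sqrt k * (t * c)) *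
          ((Real.cos (Real.sqrt k * a) - Real.cos (Real.sqrt k * b) * Real.cos (Real.sqrt k * c)) /
            (Real.sin (Real.sqrt k * b) * Real.sin (Real.sqrt k * c))))
  else
    (Real.sqrt (-k))⁻¹ * arcosh
      (Real.cosh (Real.sqrt (-k) * b) * Real.cosh (Real.sqrt (-k) * (t * c)) -
        Real.sinh (Real.sqrt (-k) * b) * Real.sinh (Real.sqrt (-k) * (t * c)) *
          ((Real.cosh (Real.sqrt (-k) * b) * Real.cosh (Real.sqrt (-k) * c) -
              Real.cosh (Real.sqrt (-k) * a)) /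
            (Real.sinh (Real.sqrt (-k) * b) * Real.sinh (Real.sqrt (-k) * c))))

/-- `X` is a CAT(k) space: it is geodesic (up to the critical distance `π/√k` when `k > 0`),
and every geodesic triangle (of perimeter `< 2π/√k` when `k > 0`) satisfies the comparison
condition against the model plane of constant curvature `k`. -/
def IsCAT (k : ℝ) (X : Type*) [MetricSpace X] : Prop :=
  (∀ x y : X, (0 < k → dist x y < Real.pi / Real.sqrt k) → ∃ γ : ℝ → X, IsGeodSeg γ x y) ∧
  ∀ (x y z : X) (γ : ℝ → X), IsGeodSeg γ x y →
    (0 < k → dist x y + dist y z + dist z x < 2 * Real.pi / Real.sqrt k) →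
    ∀ t ∈ Set.Icc (0:ℝ) 1, dist z (γ t) ≤ cmpDist k (dist y z) (dist x z) (dist x y) t




/-! ## Abstract simplicial complexes and metric (intrinsic) realizations -/

/-- A finite abstract simplicial complex on the vertex type `V`. -/
structure SimpComplex (V : Type*) where
  faces : Set (Finset V)
  finite : faces.Finite
  not_empty_mem : ∅ ∉ faces
  down_closed : ∀ σ ∈ faces, ∀ τ : Finset V, τ ⊆ σ → τ ≠ ∅ → τ ∈ faces

/-- A realization of an abstract simplicial complex `K` as an intrinsic metric complex on the
metric space `X`: each face is realized by a compact connected subset, realizations are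
compatible with the face structure (monotone, intersections match, vertices are points),
and the realizations cover `X`. -/
structure MetricRealization {V : Type*} [DecidableEq V] (K : SimpComplex V)
    (X : Type*) [MetricSpace X] where
  realize : Finset V → Set X
  vertexPt : V → X
  realize_empty : realize ∅ = ∅
  realize_vertex : ∀ v : V, {v} ∈ K.faces → realize {v} = {vertexPt v}
  realize_nonempty : ∀ σ ∈ K.faces, (realize σ).Nonempty
  realize_compact : ∀ σ ∈ K.faces, IsCompact (realize σ)
  realize_connected : ∀ σ ∈ K.faces, IsConnected (realize σ)
  realize_mono : ∀ σ ∈ K.faces, ∀ τ ∈ K.faces, σ ⊆ τ → realize σ ⊆ realize τ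
  realize_strict : ∀ σ ∈ K.faces, ∀ τ ∈ K.faces, σ ⊂ τ → realize σ ≠ realize τ
  realize_inter : ∀ σ ∈ K.faces, ∀ τ ∈ K.faces, realize σ ∩ realize τ = realize (σ ∩ τ)
  realize_cover : (⋃ σ ∈ K.faces, realize σ) = Set.univ

/-- The underlying space of the star of the face `σ`: the union of the (realizations of)
all faces containing `σ`. -/
def starSpace {V X : Type*} [DecidableEq V] [MetricSpace X] (K : SimpComplex V)
    (R : MetricRealization K X) (σ : Finset V) : Set X :=
  ⋃ τ ∈ {τ | τ ∈ K.faces ∧ σ ⊆ τ}, R.realize τ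

/-! ### Metric conditions on the faces -/

/-- The `i`-th vertex of the standard regular Euclidean simplex with `m` vertices and all
edge lengths equal to `1`. -/
noncomputable def regVertex (m : ℕ) (i : Fin m) : EuclideanSpace ℝ (Fin m) :=
  (Real.sqrt 2)⁻¹ • EuclideanSpace.single i (1 : ℝ)

/-- The complex (via its metric realization `R`) carries the equilateral flat metric:
every face, with the induced metric, is isometric to a regular Euclidean simplex with unit
edge lengths, matching vertices to vertices. -/
def EquilateralFlat {V X : Type*} [DecidableEq V] [MetricSpace X] (K : SimpComplex V)
    (R : MetricRealization K X) : Prop :=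
  ∀ σ ∈ K.faces, ∃ φ : X → EuclideanSpace ℝ (Fin σ.card),
    Set.BijOn φ (R.realize σ) (convexHull ℝ (Set.range (regVertex σ.card))) ∧
    (∀ x ∈ R.realize σ, ∀ y ∈ R.realize σ, dist (φ x) (φ y) = dist x y) ∧
    ∀ v ∈ σ, ∃ i : Fin σ.card, φ (R.vertexPt v) = regVertex σ.card i

/-- `n` is an outward normal of the facet of the simplex with vertices `p` opposite to the
vertex `p i`. -/
def IsOutwardNormal {m : ℕ} (p : Fin m → EuclideanSpace ℝ (Fin m)) (i : Fin m)
    (n : EuclideanSpace ℝ (Fin m)) : Prop :=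
  n ∈ vectorSpan ℝ (Set.range p) ∧ n ≠ 0 ∧
    (∀ a b : Fin m, a ≠ i → b ≠ i → ⟪n, p a - p b⟫ = 0) ∧
    ∀ a : Fin m, a ≠ i → ⟪n, p i - p a⟫ < 0

/-- A Euclidean simplex is non-obtuse if the dihedral angle between any two of its facets is
at most `π/2`; equivalently, outward normals of distinct facets have non-positive inner
product. -/
def IsNonObtuseSimplex {m : ℕ} (p : Fin m → EuclideanSpace ℝ (Fin m)) : Prop :=
  ∀ i j : Fin m, i ≠ j → ∀ ni nj : EuclideanSpace ℝ (Fin m),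
    IsOutwardNormal p i ni → IsOutwardNormal p j nj → ⟪ni, nj⟫ ≤ 0

/-- The complex (via its metric realization `R`) carries a non-obtuse piecewise Euclidean
metric: every face, with the induced metric, is isometric to a non-obtuse Euclidean simplex,
matching vertices to vertices. -/
def NonObtuseFlat {V X : Type*} [DecidableEq V] [MetricSpace X] (K : SimpComplex V)
    (R : MetricRealization K X) : Prop :=
  ∀ σ ∈ K.faces, ∃ p : Fin σ.card → EuclideanSpace ℝ (Fin σ.card),
    AffineIndependent ℝ p ∧ IsNonObtuseSimplex p ∧
    ∃ φ : X → EuclideanSpace ℝ (Fin σ.card),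
      Set.BijOn φ (R.realize σ) (convexHull ℝ (Set.range p)) ∧
      (∀ x ∈ R.realize σ, ∀ y ∈ R.realize σ, dist (φ x) (φ y) = dist x y) ∧
      ∀ v ∈ σ, ∃ i : Fin σ.card, φ (R.vertexPt v) = p i

/-- Collapsibility of an abstract simplicial complex. -/
def SimpComplex.Collapsible {V : Type*} (K : SimpComplex V) : Prop := CollapsibleFin K.faces

/-- The automorphism group of `K` acts transitively on the vertices. -/
def VertexTransitive {V : Type*} [DecidableEq V] (K : SimpComplex V) : Prop :=
  ∀ v w : V, {v} ∈ K.faces → {w} ∈ K.faces →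
    ∃ e : V ≃ V, (∀ σ : Finset V, σ ∈ K.faces ↔ σ.image e ∈ K.faces) ∧ e v = w

/-! ## Intrinsic polytopal complexes on a metric space -/

/-- An intrinsic polytopal complex structure on the metric space `X`: a finite family of
compact connected cells covering `X`, closed under (nonempty) intersections. -/
structure MetPolyComplex (X : Type*) [MetricSpace X] where
  faces : Set (Set X)
  finite : faces.Finite
  face_nonempty : ∀ F ∈ faces, F.Nonempty
  face_compact : ∀ F ∈ faces, IsCompact F
  face_connected : ∀ F ∈ faces, IsConnected F
  inter_mem : ∀ F ∈ faces, ∀ G ∈ faces, (F ∩ G).Nonempty → F ∩ G ∈ faces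
  cover : ⋃₀ faces = Set.univ

/-- The underlying space of the star of the face `F` in the polytopal complex `C`. -/
def polyStar {X : Type*} [MetricSpace X] (C : MetPolyComplex X) (F : Set X) : Set X :=
  ⋃₀ {G | G ∈ C.faces ∧ F ⊆ G}

/-! ## Cube complexes -/

/-- The unit cube `[0,1]^k`. -/
def unitCube (k : ℕ) : Set (EuclideanSpace ℝ (Fin k)) := {x | ∀ i, x i ∈ Set.Icc (0:ℝ) 1}

/-- A face of the unit cube `[0,1]^k`: some coordinates are frozen to `0` or `1`. -/
def IsCubeFace {k : ℕ} (Q : Set (EuclideanSpace ℝ (Fin k))) : Prop :=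
  ∃ a : Fin k → Set ℝ, (∀ i, a i = {0} ∨ a i = {1} ∨ a i = Set.Icc (0:ℝ) 1) ∧
    Q = {x | ∀ i, x i ∈ a i}

/-- A (bundled) cube complex: a metric space `X` together with an intrinsic polytopal complex
structure in which every cell is isometric to a unit Euclidean cube, in such a way that the
cells contained in it correspond exactly to the faces of the cube. -/
structure CubeComplexB where
  X : Type
  [ms : MetricSpace X]
  faces : Set (Set X)
  finite : faces.Finite
  face_nonempty : ∀ F ∈ faces, F.Nonempty
  face_compact : ∀ F ∈ faces, IsCompact F
  inter_mem : ∀ F ∈ faces, ∀ G ∈ faces, (F ∩ G).Nonempty → F ∩ G ∈ faces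
  cover : ⋃₀ faces = Set.univ
  cube_chart : ∀ F ∈ faces, ∃ (k : ℕ) (φ : X → EuclideanSpace ℝ (Fin k)),
    Set.BijOn φ F (unitCube k) ∧
    (∀ x ∈ F, ∀ y ∈ F, dist (φ x) (φ y) = dist x y) ∧
    ∀ G : Set X, (G ∈ faces ∧ G ⊆ F) ↔ ∃ Q, IsCubeFace Q ∧ G = F ∩ φ ⁻¹' Q

attribute [instance] CubeComplexB.ms


/-! ## Geometric polytopal complexes in a real vector space -/

section Geom

variable {E : Type*} [NormedAddCommGroup E] [NormedSpace ℝ E]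

/-- A (nonempty) polytope: the convex hull of finitely many points. -/
def IsPolytope (P : Set E) : Prop := ∃ s : Finset E, s.Nonempty ∧ P = convexHull ℝ (s : Set E)

/-- `F` is a (nonempty) face of the polytope `P`: a nonempty convex extreme subset. -/
def IsFaceOfPoly (P F : Set E) : Prop := F.Nonempty ∧ Convex ℝ F ∧ IsExtreme ℝ P F

/-- A finite geometric polytopal complex: a finite family of polytopes such that every face
of a member is a member and the intersection of any two members is a face of both. -/
structure GeomComplex (E : Type*) [NormedAddCommGroup E] [NormedSpace ℝ E] where
  faces : Set (Set E)
  finite : faces.Finite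
  poly : ∀ F ∈ faces, IsPolytope F
  down : ∀ F ∈ faces, ∀ G : Set E, IsFaceOfPoly F G → G ∈ faces
  inter : ∀ F ∈ faces, ∀ G ∈ faces, (F ∩ G).Nonempty →
    IsFaceOfPoly F (F ∩ G) ∧ IsFaceOfPoly G (F ∩ G)

/-- The underlying space of a geometric polytopal complex. -/
def gcSpace (K : GeomComplex E) : Set E := ⋃₀ K.faces

/-- A geometric polytopal complex is simplicial if all its faces are simplices. -/
def IsSimplicial (K : GeomComplex E) : Prop :=
  ∀ F ∈ K.faces, ∃ s : Finset E,
    AffineIndependent ℝ (fun x : (s : Set E) => (x : E)) ∧ F = convexHull ℝ (s : Set E)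

/-- The barycenter of a polytope: the centroid of its extreme points (vertices). -/
noncomputable def bary (F : Set E) : E :=
  open scoped Classical in
  if h : (Set.extremePoints ℝ F).Finite then h.toFinset.centroid ℝ id else 0

/-- The faces of the derived (barycentric) subdivision of a complex: simplices spanned by
barycenters of chains of faces. -/
def sdFaces (K : Set (Set E)) : Set (Set E) :=
  {F | ∃ c : Set (Set E), c ⊆ K ∧ c.Nonempty ∧ c.Finite ∧ IsChain (· ⊆ ·) c ∧
        F = convexHull ℝ (bary '' c)}

/-- The `m`-fold iterated derived subdivision. -/
def sdIter (m : ℕ) (K : Set (Set E)) : Set (Set E) := sdFaces^[m] K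

/-- The boundary subcomplex: the faces lying in the topological frontier of the underlying
space. -/
def bdry (K : Set (Set E)) : Set (Set E) := {F ∈ K | F ⊆ frontier (⋃₀ K)}

/-- The restriction of a complex to the subset `A`: all faces lying in `A`. -/
def restrict (K : Set (Set E)) (A : Set E) : Set (Set E) := {F ∈ K | F ⊆ A}

/-- Deletion of the vertex `x` from a geometric simplicial complex. -/
def vdel (K : Set (Set E)) (x : E) : Set (Set E) := {F ∈ K | x ∉ F}

/-- The link of the vertex `x` in a geometric simplicial complex. -/
def vlink (K : Set (Set E)) (x : E) : Set (Set E) :=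
  {F ∈ K | x ∉ F ∧ convexHull ℝ (insert x F) ∈ K}

/-- Non-evasiveness of a geometric simplicial complex: a single point is non-evasive, and a
complex is non-evasive if it has a vertex whose link and deletion are both non-evasive. -/
inductive NonEvasive : Set (Set E) → Prop
  | point (x : E) : NonEvasive {{x}}
  | step (K : Set (Set E)) (x : E) : {x} ∈ K →
      NonEvasive (vlink K x) → NonEvasive (vdel K x) → NonEvasive K

/-- A non-evasiveness step: deletion of a vertex whose link is non-evasive. -/
def NEStep (K L : Set (Set E)) : Prop :=
  ∃ x : E, {x} ∈ K ∧ NonEvasive (vlink K x) ∧ L = vdel K x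

/-- `K ↘_NE L`: `L` is obtained from `K` by a sequence of non-evasiveness steps. -/
def NECollapses : Set (Set E) → Set (Set E) → Prop := Relation.ReflTransGen NEStep

/-- A star-shaped subset of a real vector space. -/
def StarShaped (A : Set E) : Prop := ∃ x ∈ A, ∀ y ∈ A, segment ℝ x y ⊆ A

/-- `D` is a subdivision of the geometric complex `K`. -/
def SubdividesG (D K : GeomComplex E) : Prop :=
  gcSpace D = gcSpace K ∧ ∀ F ∈ D.faces, ∃ G ∈ K.faces, F ⊆ G

/-- The complex of all (nonempty) faces of a polytope `P`, including `P` itself. -/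
def polyFaces (P : Set E) : Set (Set E) := {F | IsFaceOfPoly P F}

/-- The boundary complex of a polytope `P`: all proper (nonempty) faces. -/
def properFaces (P : Set E) : Set (Set E) := {F | IsFaceOfPoly P F ∧ F ≠ P}

/-- The star of a face `μ` in the complex `K`: all faces contained in a face of `K`
containing `μ`. -/
def starIn (K : Set (Set E)) (μ : Set E) : Set (Set E) :=
  {F ∈ K | ∃ G ∈ K, μ ⊆ G ∧ F ⊆ G}

end Geom

/-! ## PL equivalence -/

/-- Two geometric complexes are PL homeomorphic if they admit combinatorially equivalent
subdivisions. -/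
def PLHomeoGeom {E F : Type*} [NormedAddCommGroup E] [NormedSpace ℝ E]
    [NormedAddCommGroup F] [NormedSpace ℝ F] (K : GeomComplex E) (L : GeomComplex F) : Prop :=
  ∃ (K' : GeomComplex E) (L' : GeomComplex F),
    SubdividesG K' K ∧ SubdividesG L' L ∧ CombEquiv K'.faces L'.faces

/-- A subdivision of a bundled cube complex: an intrinsic polytopal complex on the same
metric space, each of whose cells lies in a cell of the cube complex. -/
def CubeSubdivides (C : CubeComplexB) (D : MetPolyComplex C.X) : Prop :=
  ∀ F ∈ D.faces, ∃ G ∈ C.faces, F ⊆ G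

/-- A geometric complex `K` and a cube complex `C` are PL homeomorphic: they admit
combinatorially equivalent subdivisions. -/
def PLHomeoGeomCube {E : Type*} [NormedAddCommGroup E] [NormedSpace ℝ E]
    (K : GeomComplex E) (C : CubeComplexB) : Prop :=
  ∃ (K' : GeomComplex E) (D : MetPolyComplex C.X),
    SubdividesG K' K ∧ CubeSubdivides C D ∧ CombEquiv K'.faces D.faces

/-! ## Spherical polytopal complexes -/

section Spherical

variable {E : Type*} [NormedAddCommGroup E] [InnerProductSpace ℝ E]

/-- The cone (with apex `0`) over a subset `F`. -/
def coneOf (F : Set E) : Set E := {y | ∃ t : ℝ, 0 ≤ t ∧ ∃ x ∈ F, y = t • x}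

/-- A polyhedral cone: the cone over the convex hull of a finite set. -/
def IsPolyCone (C : Set E) : Prop := ∃ s : Finset E, C = coneOf (convexHull ℝ (s : Set E))

/-- Radial projection onto the unit sphere. -/
noncomputable def sphNormalize (x : E) : E := ‖x‖⁻¹ • x

/-- The vertices of a spherical polytope `F`: the points of `F` spanning extreme rays of the
cone over `F`. -/
def svert (F : Set E) : Set E := {x ∈ F | IsExtreme ℝ (coneOf F) (coneOf {x})}

/-- The (spherical) barycenter of a spherical polytope: the radial projection of the centroid
of its vertices. -/
noncomputable def sbary (F : Set E) : E :=
  open scoped Classical in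
  if h : (svert F).Finite then sphNormalize (h.toFinset.centroid ℝ id) else 0

/-- The faces of the derived (barycentric) subdivision of a spherical complex: the spherical
simplices spanned by the barycenters of chains of faces. -/
def ssdFaces (K : Set (Set E)) : Set (Set E) :=
  {F | ∃ c : Set (Set E), c ⊆ K ∧ c.Nonempty ∧ c.Finite ∧ IsChain (· ⊆ ·) c ∧
        F = sphNormalize '' convexHull ℝ (sbary '' c)}

/-- The linear dimension of the cone spanned by a face. -/
noncomputable def cdim (F : Set E) : ℕ := Module.finrank ℝ (Submodule.span ℝ F)

end Spherical

/-- The unit sphere `S^d` inside `ℝ^{d+1}`. -/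
def uSphere (d : ℕ) : Set (EuclideanSpace ℝ (Fin (d+1))) := Metric.sphere 0 1

/-- A geometric polytopal complex in the unit sphere `S^d`: a finite family of spherical
polytopes (each contained in an open hemisphere), such that every face of a member is a
member and the intersection of two members is a face of both (faces of a spherical polytope
being the radial projections of the faces of the cone over it). -/
structure SphComplex (d : ℕ) where
  faces : Set (Set (EuclideanSpace ℝ (Fin (d+1))))
  finite : faces.Finite
  face_nonempty : ∀ F ∈ faces, F.Nonempty
  sub_sphere : ∀ F ∈ faces, F ⊆ uSphere d
  hemi : ∀ F ∈ faces, ∃ u : EuclideanSpace ℝ (Fin (d+1)), ‖u‖ = 1 ∧ ∀ x ∈ F, 0 < ⟪u, x⟫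
  polycone : ∀ F ∈ faces, IsPolyCone (coneOf F)
  down : ∀ F ∈ faces, ∀ G : Set (EuclideanSpace ℝ (Fin (d+1))), G.Nonempty → G ⊆ uSphere d →
    Convex ℝ (coneOf G) → IsExtreme ℝ (coneOf F) (coneOf G) → G ∈ faces
  inter : ∀ F ∈ faces, ∀ G ∈ faces, (F ∩ G).Nonempty →
    IsExtreme ℝ (coneOf F) (coneOf (F ∩ G)) ∧ IsExtreme ℝ (coneOf G) (coneOf (F ∩ G))

/-- The underlying space of a spherical complex. -/
def sphSpace {d : ℕ} (K : SphComplex d) : Set (EuclideanSpace ℝ (Fin (d+1))) := ⋃₀ K.faces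

/-- A spherical complex is simplicial if each face is a spherical simplex, i.e. the radial
projection of the convex hull of linearly independent unit vectors. -/
def IsSphSimplicial {d : ℕ} (K : SphComplex d) : Prop :=
  ∀ F ∈ K.faces, ∃ s : Finset (EuclideanSpace ℝ (Fin (d+1))),
    (s : Set (EuclideanSpace ℝ (Fin (d+1)))) ⊆ uSphere d ∧
    LinearIndependent ℝ (fun x : (s : Set (EuclideanSpace ℝ (Fin (d+1)))) =>
      (x : EuclideanSpace ℝ (Fin (d+1)))) ∧
    F = sphNormalize '' convexHull ℝ (s : Set (EuclideanSpace ℝ (Fin (d+1))))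

/-- The closed hemisphere of `S^d` determined by the unit vector `u`. -/
def closedHemi {d : ℕ} (u : EuclideanSpace ℝ (Fin (d+1))) : Set (EuclideanSpace ℝ (Fin (d+1))) :=
  {x ∈ uSphere d | 0 ≤ ⟪u, x⟫}

/-- A hemisphere is in general position with respect to a complex if its boundary great
sphere contains no vertex of the complex. -/
def GeneralPosition {d : ℕ} (K : SphComplex d) (u : EuclideanSpace ℝ (Fin (d+1))) : Prop :=
  ∀ x : EuclideanSpace ℝ (Fin (d+1)), {x} ∈ K.faces → ⟪u, x⟫ ≠ 0

/-- The boundary subcomplex of a spherical `d`-complex: the faces contained in a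
`(d-1)`-dimensional face that lies in exactly one `d`-dimensional face. -/
def sbdry (d : ℕ) (K : Set (Set (EuclideanSpace ℝ (Fin (d+1))))) :
    Set (Set (EuclideanSpace ℝ (Fin (d+1)))) :=
  {F ∈ K | ∃ R ∈ K, F ⊆ R ∧ cdim R = d ∧ ∃! G, G ∈ K ∧ R ⊆ G ∧ cdim G = d + 1}

/-- The derived neighborhood `N(D, C)` of a subcomplex `D` of the spherical complex `C`:
the subcomplex of `sd C` consisting of all faces of stars of faces of `sd D`. -/
def derivedNbhd {E : Type*} [NormedAddCommGroup E] [InnerProductSpace ℝ E]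
    (D K : Set (Set E)) : Set (Set E) :=
  {F ∈ ssdFaces K | ∃ G ∈ ssdFaces K, F ⊆ G ∧ ∃ σ ∈ ssdFaces D, σ ⊆ G}

/-! ## Geometric realizations of abstract simplicial complexes, star-minimal functions and
discrete Morse matchings -/

section Morse

variable {V E : Type*} [DecidableEq V] [NormedAddCommGroup E] [NormedSpace ℝ E]

/-- A geometric realization of an abstract simplicial complex: the vertices are placed at
points of `E` so that each face spans a geometric simplex, and the geometric simplices
intersect along common faces. -/
structure GeomReal (K : SimpComplex V) (E : Type*) [NormedAddCommGroup E]
    [NormedSpace ℝ E] where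
  pos : V → E
  indep : ∀ σ ∈ K.faces, AffineIndependent ℝ (fun v : (σ : Set V) => pos v)
  inter : ∀ σ ∈ K.faces, ∀ τ ∈ K.faces,
    convexHull ℝ (pos '' σ) ∩ convexHull ℝ (pos '' τ) = convexHull ℝ (pos '' (σ ∩ τ : Finset V))

/-- The underlying polyhedron `|C|` of a geometric realization. -/
def gSpace {K : SimpComplex V} (R : GeomReal K E) : Set E :=
  ⋃ σ ∈ K.faces, convexHull ℝ (R.pos '' σ)

/-- The underlying space of the star of the face `σ`. -/
def gStar {K : SimpComplex V} (R : GeomReal K E) (σ : Finset V) : Set E :=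
  ⋃ τ ∈ {τ | τ ∈ K.faces ∧ σ ⊆ τ}, convexHull ℝ (R.pos '' τ)

/-- A star-minimal function on `|C|`: it is continuous, attains a unique absolute minimum
on the star of each face (including the empty face, whose star is all of `|C|`), and is
injective on vertices. -/
def StarMinimal {K : SimpComplex V} (R : GeomReal K E) (f : E → ℝ) : Prop :=
  ContinuousOn f (gSpace R) ∧
  (∀ σ : Finset V, (σ ∈ K.faces ∨ σ = ∅) →
    ∃ m ∈ gStar R σ, (∀ y ∈ gStar R σ, f m ≤ f y) ∧ ∀ y ∈ gStar R σ, f y = f m → y = m) ∧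
  ∀ v w : V, {v} ∈ K.faces → {w} ∈ K.faces → f (R.pos v) = f (R.pos w) → v = w

/-- A discrete vector field on the complex with faces `K`: a set of pairs `(σ, Σ)` with `σ`
a codimension-one face of `Σ`, such that no face belongs to two pairs. -/
def IsDVF (K : Set (Finset V)) (W : Set (Finset V × Finset V)) : Prop :=
  (∀ p ∈ W, p.1 ∈ K ∧ p.2 ∈ K ∧ p.1 ⊂ p.2 ∧ p.2.card = p.1.card + 1) ∧
  ∀ p ∈ W, ∀ q ∈ W, p ≠ q → p.1 ≠ q.1 ∧ p.2 ≠ q.2 ∧ p.1 ≠ q.2 ∧ p.2 ≠ q.1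

/-- The vector field `W` admits a closed gradient path. -/
def HasClosedGradPath (W : Set (Finset V × Finset V)) : Prop :=
  ∃ (k : ℕ) (p : ℕ → Finset V × Finset V), 1 ≤ k ∧ (∀ i ≤ k, p i ∈ W) ∧
    (∀ i < k, (p (i+1)).1 ⊆ (p i).2 ∧ (p (i+1)).1 ≠ (p i).1 ∧
      (p (i+1)).1.card + 1 = (p i).2.card) ∧
    (p k).1 = (p 0).1

/-- A Morse matching: a discrete vector field with no closed gradient path. -/
def IsMorseMatching (K : Set (Finset V)) (W : Set (Finset V × Finset V)) : Prop :=
  IsDVF K W ∧ ¬ HasClosedGradPath W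

end Morse

/-! ## Topological manifolds with boundary and triangulations -/

/-- The closed Euclidean half-space `{x : x 0 ≥ 0}` of dimension `n`. -/
def eucHalfSpace (n : ℕ) : Set (EuclideanSpace ℝ (Fin n)) :=
  {x | ∀ i : Fin n, (i : ℕ) = 0 → 0 ≤ x i}

/-- A compact topological `d`-manifold with (possibly empty) boundary: a Hausdorff space
locally homeomorphic to the closed half-space `ℝ^d_{≥0}`. -/
def IsTopManifoldWithBoundary (d : ℕ) (M : Type*) [TopologicalSpace M] : Prop :=
  T2Space M ∧ Nonempty (ChartedSpace (eucHalfSpace d) M)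
/-! ### Auxiliary lemmas -/

section Aux

open Finset in
lemma regVertex_apply (m : ℕ) (i j : Fin m) :
    regVertex m i j = if j = i then (Real.sqrt 2)⁻¹ else 0 := by
  simp [regVertex, EuclideanSpace.single_apply, PiLp.smul_apply]

lemma sqrt_two_pos : (0:ℝ) < Real.sqrt 2 := Real.sqrt_pos.mpr (by norm_num)

lemma sq_sqrt_two : (Real.sqrt 2) ^ 2 = 2 := Real.sq_sqrt (by norm_num)

lemma inv_sqrt_two_sq : ((Real.sqrt 2)⁻¹) ^ 2 = 2⁻¹ := by
  rw [inv_pow, sq_sqrt_two]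

lemma two_mul_inv_sqrt_two : 2 * (Real.sqrt 2)⁻¹ = Real.sqrt 2 := by
  rw [mul_inv_eq_iff_eq_mul₀ sqrt_two_pos.ne']
  exact (Real.mul_self_sqrt (by norm_num)).symm

lemma sum_regVertex (m : ℕ) (i : Fin m) : ∑ j, regVertex m i j = (Real.sqrt 2)⁻¹ := by
  simp [regVertex_apply]

/-- Membership in the standard regular simplex, by coordinates. -/
lemma mem_hull_iff {m : ℕ} (x : EuclideanSpace ℝ (Fin m)) :
    x ∈ convexHull ℝ (Set.range (regVertex m)) ↔
      (∀ j, 0 ≤ x j) ∧ ∑ j, x j = (Real.sqrt 2)⁻¹ := by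
  constructor
  · intro hx
    constructor
    · intro j
      have hconv : Convex ℝ {y : EuclideanSpace ℝ (Fin m) | 0 ≤ y j} := by
        intro a ha b hb s t hs ht hst
        have hco : (s • a + t • b) j = s * a j + t * b j := rfl
        simp only [Set.mem_setOf_eq] at ha hb ⊢
        rw [hco]
        exact add_nonneg (mul_nonneg hs ha) (mul_nonneg ht hb)
      have hsub : Set.range (regVertex m) ⊆ {y : EuclideanSpace ℝ (Fin m) | 0 ≤ y j} := by
        rintro _ ⟨i, rfl⟩
        simp only [Set.mem_setOf_eq, regVertex_apply]
        split
        · positivity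
        · exact le_refl 0
      exact convexHull_min hsub hconv hx
    · have hconv : Convex ℝ {y : EuclideanSpace ℝ (Fin m) | ∑ j, y j = (Real.sqrt 2)⁻¹} := by
        intro a ha b hb s t hs ht hst
        simp only [Set.mem_setOf_eq] at ha hb ⊢
        have : ∀ j, (s • a + t • b) j = s * a j + t * b j := fun _ => rfl
        simp only [this, Finset.sum_add_distrib, ← Finset.mul_sum, ha, hb]
        ring_nf
        linear_combination (Real.sqrt 2)⁻¹ * hst
      have hsub : Set.range (regVertex m) ⊆
          {y : EuclideanSpace ℝ (Fin m) | ∑ j, y j = (Real.sqrt 2)⁻¹} := by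
        rintro _ ⟨i, rfl⟩
        exact sum_regVertex m i
      exact convexHull_min hsub hconv hx
  · rintro ⟨h0, hsum⟩
    have hw : ∀ j ∈ Finset.univ, (0:ℝ) ≤ Real.sqrt 2 * x j := by
      intro j _
      exact mul_nonneg sqrt_two_pos.le (h0 j)
    have hwsum : ∑ j, Real.sqrt 2 * x j = 1 := by
      rw [← Finset.mul_sum, hsum, mul_inv_cancel₀ sqrt_two_pos.ne']
    have := Finset.centerMass_mem_convexHull (t := (Finset.univ : Finset (Fin m)))
      (w := fun j => Real.sqrt 2 * x j) (z := regVertex m) hw (by rw [hwsum]; norm_num)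
      (fun i _ => Set.mem_range_self i)
    convert this using 1
    rw [Finset.centerMass, hwsum, inv_one, one_smul]
    ext j
    have : (∑ i, (Real.sqrt 2 * x i) • regVertex m i) j
        = ∑ i, (Real.sqrt 2 * x i) * regVertex m i j := by
      classical
      induction (Finset.univ : Finset (Fin m)) using Finset.induction with
      | empty => simp
      | insert _ _ hne ih =>
        rw [Finset.sum_insert hne, Finset.sum_insert hne, ← ih]
        rfl
    rw [this]
    rw [Finset.sum_eq_single j]
    · rw [regVertex_apply, if_pos rfl]
      field_simp
    · intro i _ hij
      rw [regVertex_apply, if_neg (Ne.symm hij), mul_zero]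
    · intro h; exact absurd (Finset.mem_univ j) h

lemma cmpDist_zero (a b c t : ℝ) :
    cmpDist 0 a b c t = Real.sqrt (b ^ 2 + t ^ 2 * c ^ 2 - t * (b ^ 2 + c ^ 2 - a ^ 2)) := by
  unfold cmpDist
  rw [if_pos rfl]

lemma euclid_dist_sq {m : ℕ} (x y : EuclideanSpace ℝ (Fin m)) :
    dist x y ^ 2 = ∑ j, (x j - y j) ^ 2 := by
  rw [EuclideanSpace.dist_eq, Real.sq_sqrt (by positivity)]
  congr 1; funext j; rw [Real.dist_eq, sq_abs]

lemma coord_le_dist {m : ℕ} (x y : EuclideanSpace ℝ (Fin m)) (j : Fin m) :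
    |x j - y j| ≤ dist x y := by
  have h1 : (x j - y j)^2 ≤ ∑ i, (x i - y i) ^ 2 :=
    Finset.single_le_sum (f := fun i => (x i - y i)^2) (fun i _ => by positivity)
      (Finset.mem_univ j)
  have h2 := euclid_dist_sq x y
  nlinarith [abs_nonneg (x j - y j), dist_nonneg (x := x) (y := y), sq_abs (x j - y j)]

lemma dist_sq_regVertex {m : ℕ} (x : EuclideanSpace ℝ (Fin m)) (i : Fin m) :
    dist x (regVertex m i) ^ 2 = (∑ j, x j ^ 2) - Real.sqrt 2 * x i + 2⁻¹ := by
  rw [euclid_dist_sq]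
  have : ∀ j, (x j - regVertex m i j) ^ 2
      = x j ^ 2 - (if j = i then 2 * (Real.sqrt 2)⁻¹ * x j else 0)
        + (if j = i then ((Real.sqrt 2)⁻¹)^2 else 0) := by
    intro j
    rw [regVertex_apply]
    split <;> ring
  simp only [this, Finset.sum_add_distrib, Finset.sum_sub_distrib, Finset.sum_ite_eq',
    Finset.mem_univ, if_pos]
  have h2 : 2 * (Real.sqrt 2)⁻¹ = Real.sqrt 2 := by
    rw [mul_inv_eq_iff_eq_mul₀ sqrt_two_pos.ne']
    exact (Real.mul_self_sqrt (by norm_num)).symm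
  rw [h2, inv_sqrt_two_sq]

lemma sum_sq_regVertex {m : ℕ} (i : Fin m) : ∑ k, regVertex m i k ^ 2 = 2⁻¹ := by
  have : ∀ k, regVertex m i k ^ 2 = if k = i then ((Real.sqrt 2)⁻¹)^2 else 0 := by
    intro k; rw [regVertex_apply]; split <;> simp
  simp only [this, Finset.sum_ite_eq', Finset.mem_univ, if_pos, inv_sqrt_two_sq]

lemma dist_regVertex_ne {m : ℕ} {i j : Fin m} (h : i ≠ j) :
    dist (regVertex m i) (regVertex m j) = 1 := by
  have hsq : dist (regVertex m i) (regVertex m j) ^ 2 = 1 := by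
    rw [dist_sq_regVertex, sum_sq_regVertex, regVertex_apply, if_neg (Ne.symm h)]
    ring
  nlinarith [dist_nonneg (x := regVertex m i) (y := regVertex m j)]

end Aux

section ChartInfra

variable {V X : Type*} [DecidableEq V] [MetricSpace X]
variable (K : SimpComplex V) (R : MetricRealization K X)

lemma face_nonempty {σ : Finset V} (hσ : σ ∈ K.faces) : σ ≠ ∅ :=
  fun h => K.not_empty_mem (h ▸ hσ)

lemma face_vertex_mem {σ : Finset V} (hσ : σ ∈ K.faces) {v : V} (hv : v ∈ σ) :
    {v} ∈ K.faces :=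
  K.down_closed σ hσ {v} (Finset.singleton_subset_iff.mpr hv) (Finset.singleton_ne_empty v)

lemma vertexPt_mem_realize {σ : Finset V} (hσ : σ ∈ K.faces) {v : V} (hv : v ∈ σ) :
    R.vertexPt v ∈ R.realize σ := by
  have h1 := R.realize_vertex v (face_vertex_mem K hσ hv)
  have h2 := R.realize_mono {v} (face_vertex_mem K hσ hv) σ hσ
    (Finset.singleton_subset_iff.mpr hv)
  apply h2
  rw [h1]
  exact Set.mem_singleton _

lemma vertexPt_injective {v w : V} (hv : {v} ∈ K.faces) (hw : {w} ∈ K.faces)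
    (hne : v ≠ w) : R.vertexPt v ≠ R.vertexPt w := by
  intro h
  have h1 : R.vertexPt v ∈ R.realize {v} ∩ R.realize {w} := by
    rw [R.realize_vertex v hv, R.realize_vertex w hw]
    exact ⟨Set.mem_singleton _, by rw [h]; exact Set.mem_singleton _⟩
  rw [R.realize_inter _ hv _ hw] at h1
  have hd : ({v} ∩ {w} : Finset V) = ∅ := by
    ext a
    simp only [Finset.mem_inter, Finset.mem_singleton, Finset.notMem_empty, iff_false]
    rintro ⟨rfl, rfl⟩
    exact hne rfl
  rw [hd, R.realize_empty] at h1
  exact h1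

variable (heq : EquilateralFlat K R)

/-- The chosen isometric chart of a face. -/
noncomputable def chart {σ : Finset V} (hσ : σ ∈ K.faces) :
    X → EuclideanSpace ℝ (Fin σ.card) := (heq σ hσ).choose

lemma chart_bijOn {σ : Finset V} (hσ : σ ∈ K.faces) :
    Set.BijOn (chart K R heq hσ) (R.realize σ)
      (convexHull ℝ (Set.range (regVertex σ.card))) := (heq σ hσ).choose_spec.1

lemma chart_dist {σ : Finset V} (hσ : σ ∈ K.faces) {x y : X}
    (hx : x ∈ R.realize σ) (hy : y ∈ R.realize σ) :
    dist (chart K R heq hσ x) (chart K R heq hσ y) = dist x y :=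
  (heq σ hσ).choose_spec.2.1 x hx y hy

lemma chart_vertex_exists {σ : Finset V} (hσ : σ ∈ K.faces) {v : V} (hv : v ∈ σ) :
    ∃ i, chart K R heq hσ (R.vertexPt v) = regVertex σ.card i :=
  (heq σ hσ).choose_spec.2.2 v hv

/-- The index of a vertex in the chosen chart. -/
noncomputable def idx {σ : Finset V} (hσ : σ ∈ K.faces) (v : V) (hv : v ∈ σ) :
    Fin σ.card := (chart_vertex_exists K R heq hσ hv).choose

lemma chart_vertexPt {σ : Finset V} (hσ : σ ∈ K.faces) {v : V} (hv : v ∈ σ) :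
    chart K R heq hσ (R.vertexPt v) = regVertex σ.card (idx K R heq hσ v hv) :=
  (chart_vertex_exists K R heq hσ hv).choose_spec

include heq in
lemma dist_vertexPt {σ : Finset V} (hσ : σ ∈ K.faces) {v w : V} (hv : v ∈ σ)
    (hw : w ∈ σ) (hne : v ≠ w) : dist (R.vertexPt v) (R.vertexPt w) = 1 := by
  have hide : idx K R heq hσ v hv ≠ idx K R heq hσ w hw := by
    intro h
    have h1 : chart K R heq hσ (R.vertexPt v) = chart K R heq hσ (R.vertexPt w) := by
      rw [chart_vertexPt K R heq hσ hv, chart_vertexPt K R heq hσ hw, h]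
    have h2 : dist (R.vertexPt v) (R.vertexPt w) = 0 := by
      rw [← chart_dist K R heq hσ (vertexPt_mem_realize K R hσ hv)
        (vertexPt_mem_realize K R hσ hw), h1, dist_self]
    exact vertexPt_injective K R (face_vertex_mem K hσ hv) (face_vertex_mem K hσ hw) hne
      (dist_eq_zero.mp h2)
  rw [← chart_dist K R heq hσ (vertexPt_mem_realize K R hσ hv)
    (vertexPt_mem_realize K R hσ hw), chart_vertexPt K R heq hσ hv,
    chart_vertexPt K R heq hσ hw]
  exact dist_regVertex_ne hide

lemma idx_injective {σ : Finset V} (hσ : σ ∈ K.faces) {v w : V} (hv : v ∈ σ)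
    (hw : w ∈ σ) (h : idx K R heq hσ v hv = idx K R heq hσ w hw) : v = w := by
  by_contra hne
  have := dist_vertexPt K R heq hσ hv hw hne
  have h1 : chart K R heq hσ (R.vertexPt v) = chart K R heq hσ (R.vertexPt w) := by
    rw [chart_vertexPt K R heq hσ hv, chart_vertexPt K R heq hσ hw, h]
  have h2 : dist (R.vertexPt v) (R.vertexPt w) = 0 := by
    rw [← chart_dist K R heq hσ (vertexPt_mem_realize K R hσ hv)
      (vertexPt_mem_realize K R hσ hw), h1, dist_self]
  rw [h2] at this
  norm_num at this

/-- The vertex-index equivalence of a face. -/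
noncomputable def vE {σ : Finset V} (hσ : σ ∈ K.faces) : {v // v ∈ σ} ≃ Fin σ.card :=
  Equiv.ofBijective (fun p => idx K R heq hσ p.1 p.2)
    ((Fintype.bijective_iff_injective_and_card _).2
      ⟨fun p q h => Subtype.ext (idx_injective K R heq hσ p.2 q.2 h),
        by simp [Fintype.card_coe]⟩)

lemma vE_apply {σ : Finset V} (hσ : σ ∈ K.faces) (p : {v // v ∈ σ}) :
    vE K R heq hσ p = idx K R heq hσ p.1 p.2 := rfl

lemma chart_mem_hull {σ : Finset V} (hσ : σ ∈ K.faces) {x : X} (hx : x ∈ R.realize σ) :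
    chart K R heq hσ x ∈ convexHull ℝ (Set.range (regVertex σ.card)) :=
  (chart_bijOn K R heq hσ).mapsTo hx

lemma chart_sum {σ : Finset V} (hσ : σ ∈ K.faces) {x : X} (hx : x ∈ R.realize σ) :
    ∑ j, chart K R heq hσ x j = (Real.sqrt 2)⁻¹ :=
  ((mem_hull_iff _).1 (chart_mem_hull K R heq hσ hx)).2

lemma chart_nonneg {σ : Finset V} (hσ : σ ∈ K.faces) {x : X} (hx : x ∈ R.realize σ)
    (j : Fin σ.card) : 0 ≤ chart K R heq hσ x j :=
  ((mem_hull_iff _).1 (chart_mem_hull K R heq hσ hx)).1 j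

lemma chart_dist_vertex_sq {σ : Finset V} (hσ : σ ∈ K.faces) {x : X}
    (hx : x ∈ R.realize σ) {v : V} (hv : v ∈ σ) :
    dist x (R.vertexPt v) ^ 2 = (∑ j, chart K R heq hσ x j ^ 2)
      - Real.sqrt 2 * chart K R heq hσ x (idx K R heq hσ v hv) + 2⁻¹ := by
  rw [← chart_dist K R heq hσ hx (vertexPt_mem_realize K R hσ hv),
    chart_vertexPt K R heq hσ hv, dist_sq_regVertex]

/-- Rigidity: the chart of a larger face restricts to the chart of a smaller face. -/
lemma rigidity {ρ τ : Finset V} (hρ : ρ ∈ K.faces) (hτ : τ ∈ K.faces) (hsub : ρ ⊆ τ)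
    {x : X} (hx : x ∈ R.realize ρ) :
    (∀ v (hv : v ∈ ρ), chart K R heq hτ x (idx K R heq hτ v (hsub hv))
        = chart K R heq hρ x (idx K R heq hρ v hv)) ∧
    (∀ j : Fin τ.card, (∀ v (hv : v ∈ ρ), j ≠ idx K R heq hτ v (hsub hv)) →
        chart K R heq hτ x j = 0) := by
  classical
  have hxτ : x ∈ R.realize τ := R.realize_mono ρ hρ τ hτ hsub hx
  set y := chart K R heq hτ x with hy
  set z := chart K R heq hρ x with hz
  set A := ∑ j, y j ^ 2 with hA
  set B := ∑ i, z i ^ 2 with hB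
  set d := (A - B) / Real.sqrt 2 with hd
  have hAB : Real.sqrt 2 * d = A - B := by
    rw [hd]
    field_simp
  have key : ∀ v (hv : v ∈ ρ), y (idx K R heq hτ v (hsub hv))
      = z (idx K R heq hρ v hv) + d := by
    intro v hv
    have h1 := chart_dist_vertex_sq K R heq hτ hxτ (hsub hv)
    have h2 := chart_dist_vertex_sq K R heq hρ hx hv
    rw [← hy, ← hA] at h1
    rw [← hz, ← hB] at h2
    have h3 : Real.sqrt 2 * y (idx K R heq hτ v (hsub hv))
        = Real.sqrt 2 * (z (idx K R heq hρ v hv) + d) := by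
      rw [mul_add, hAB]
      linarith
    exact mul_left_cancel₀ sqrt_two_pos.ne' h3
  set eρ := vE K R heq hρ
  set iτ : {v // v ∈ ρ} → Fin τ.card := fun p => idx K R heq hτ p.1 (hsub p.2) with hiτ
  have hiτinj : Function.Injective iτ := fun p q h =>
    Subtype.ext (idx_injective K R heq hτ (hsub p.2) (hsub q.2) h)
  have hkey : ∀ p : {v // v ∈ ρ}, y (iτ p) = z (eρ p) + d := fun p => key p.1 p.2
  have hB' : ∑ p : {v // v ∈ ρ}, z (eρ p) ^ 2 = B := Equiv.sum_comp eρ (fun i => z i ^ 2)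
  have hz1 : ∑ p : {v // v ∈ ρ}, z (eρ p) = (Real.sqrt 2)⁻¹ := by
    rw [Equiv.sum_comp eρ z]
    exact chart_sum K R heq hρ hx
  have hcard : (Fintype.card {v // v ∈ ρ} : ℝ) = (ρ.card : ℝ) := by
    rw [Fintype.card_coe]
  set im := Finset.univ.image iτ with him
  have hsum_im : ∑ j ∈ im, y j ^ 2 = ∑ p : {v // v ∈ ρ}, y (iτ p) ^ 2 :=
    Finset.sum_image (fun a _ b _ h => hiτinj h)
  have hsplit : ∑ j ∈ Finset.univ \ im, y j ^ 2 + ∑ j ∈ im, y j ^ 2 = A :=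
    Finset.sum_sdiff (Finset.subset_univ im)
  set T := ∑ j ∈ Finset.univ \ im, y j ^ 2 with hT
  have hTnn : 0 ≤ T := Finset.sum_nonneg (fun j _ => sq_nonneg _)
  have hsum_sq : ∑ p : {v // v ∈ ρ}, y (iτ p) ^ 2
      = B + Real.sqrt 2 * d + (ρ.card : ℝ) * d ^ 2 := by
    have hexp : ∀ p : {v // v ∈ ρ}, y (iτ p) ^ 2
        = z (eρ p) ^ 2 + 2 * d * z (eρ p) + d ^ 2 := by
      intro p
      rw [hkey p]
      ring
    have h2d : 2 * d * (Real.sqrt 2)⁻¹ = Real.sqrt 2 * d := by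
      rw [mul_comm 2 d, mul_assoc, two_mul_inv_sqrt_two, mul_comm]
    calc ∑ p : {v // v ∈ ρ}, y (iτ p) ^ 2
        = ∑ p : {v // v ∈ ρ}, (z (eρ p) ^ 2 + 2 * d * z (eρ p) + d ^ 2) :=
          Finset.sum_congr rfl (fun p _ => hexp p)
      _ = B + 2 * d * (Real.sqrt 2)⁻¹ + (ρ.card : ℝ) * d ^ 2 := by
          rw [Finset.sum_add_distrib, Finset.sum_add_distrib, hB', ← Finset.mul_sum, hz1,
            Finset.sum_const, Finset.card_univ, nsmul_eq_mul, hcard]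
      _ = B + Real.sqrt 2 * d + (ρ.card : ℝ) * d ^ 2 := by rw [h2d]
  have hcardpos : (1:ℝ) ≤ (ρ.card : ℝ) := by
    have : 0 < ρ.card := Finset.card_pos.mpr (Finset.nonempty_iff_ne_empty.mpr
      (face_nonempty K hρ))
    exact_mod_cast this
  have hzero : (ρ.card : ℝ) * d ^ 2 + T = 0 := by
    have : T + (B + Real.sqrt 2 * d + (ρ.card : ℝ) * d ^ 2) = A := by
      rw [← hsum_sq, ← hsum_im]
      exact hsplit
    linarith [hAB]
  have hd0 : d = 0 := by
    nlinarith [sq_nonneg d]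
  have hT0 : T = 0 := by
    nlinarith [sq_nonneg d]
  constructor
  · intro v hv
    rw [key v hv, hd0, add_zero]
  · intro j hj
    have hjim : j ∉ im := by
      rw [him]
      simp only [Finset.mem_image, Finset.mem_univ, true_and, not_exists]
      intro p hp
      exact hj p.1 p.2 hp.symm
    have hjmem : j ∈ Finset.univ \ im := Finset.mem_sdiff.mpr ⟨Finset.mem_univ j, hjim⟩
    have := (Finset.sum_eq_zero_iff_of_nonneg (fun j _ => sq_nonneg (y j))).1 hT0 j hjmem
    exact (pow_eq_zero_iff two_ne_zero).1 this

end ChartInfra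

section PhiInfra

variable {V X : Type*} [DecidableEq V] [MetricSpace X] [Nonempty X]
variable (K : SimpComplex V) (R : MetricRealization K X)

lemma exists_face_mem (x : X) : ∃ σ ∈ K.faces, x ∈ R.realize σ := by
  have hx : x ∈ ⋃ σ ∈ K.faces, R.realize σ := by rw [R.realize_cover]; trivial
  simpa using hx

lemma exists_carrier (x : X) :
    ∃ ν, ν ∈ K.faces ∧ x ∈ R.realize ν ∧ ∀ τ ∈ K.faces, x ∈ R.realize τ → ν ⊆ τ := by
  classical
  obtain ⟨σ₀, hσ₀, hx₀⟩ := exists_face_mem K R x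
  set S := K.finite.toFinset.filter (fun σ => x ∈ R.realize σ) with hS
  have hmem : ∀ σ, σ ∈ S ↔ σ ∈ K.faces ∧ x ∈ R.realize σ := by
    intro σ; simp [hS, Set.Finite.mem_toFinset]
  have hne : S.Nonempty := ⟨σ₀, (hmem σ₀).2 ⟨hσ₀, hx₀⟩⟩
  obtain ⟨ν, hν, hmin⟩ := S.exists_min_image Finset.card hne
  rw [hmem] at hν
  refine ⟨ν, hν.1, hν.2, ?_⟩
  intro τ hτ hxτ
  have hx2 : x ∈ R.realize (ν ∩ τ) := by
    rw [← R.realize_inter ν hν.1 τ hτ]; exact ⟨hν.2, hxτ⟩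
  have hne2 : ν ∩ τ ≠ ∅ := by
    intro h; rw [h, R.realize_empty] at hx2; exact hx2
  have hface : ν ∩ τ ∈ K.faces := K.down_closed ν hν.1 _ Finset.inter_subset_left hne2
  have hmemS : ν ∩ τ ∈ S := (hmem _).2 ⟨hface, hx2⟩
  have hcard := hmin _ hmemS
  have heqi := Finset.eq_of_subset_of_card_le Finset.inter_subset_left hcard
  intro a ha
  have : a ∈ ν ∩ τ := by rw [heqi]; exact ha
  exact Finset.mem_of_mem_inter_right this

/-- The (unique) minimal face whose realization contains `x`. -/
noncomputable def carrier (x : X) : Finset V := (exists_carrier K R x).choose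

lemma carrier_faces (x : X) : carrier K R x ∈ K.faces :=
  (exists_carrier K R x).choose_spec.1

lemma carrier_mem_realize (x : X) : x ∈ R.realize (carrier K R x) :=
  (exists_carrier K R x).choose_spec.2.1

lemma carrier_min (x : X) {τ : Finset V} (hτ : τ ∈ K.faces) (hx : x ∈ R.realize τ) :
    carrier K R x ⊆ τ :=
  (exists_carrier K R x).choose_spec.2.2 τ hτ hx

/-- Coordinate relabelling of Euclidean space. -/
noncomputable def relabel {m n : ℕ} (π : Fin m ≃ Fin n) (y : EuclideanSpace ℝ (Fin m)) :
    EuclideanSpace ℝ (Fin n) := WithLp.toLp 2 (fun j => y (π.symm j))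

lemma relabel_apply {m n : ℕ} (π : Fin m ≃ Fin n) (y : EuclideanSpace ℝ (Fin m))
    (j : Fin n) : relabel π y j = y (π.symm j) := rfl

lemma relabel_dist {m n : ℕ} (π : Fin m ≃ Fin n) (y z : EuclideanSpace ℝ (Fin m)) :
    dist (relabel π y) (relabel π z) = dist y z := by
  rw [EuclideanSpace.dist_eq, EuclideanSpace.dist_eq]
  congr 1
  exact Equiv.sum_comp π.symm (fun i => dist (y i) (z i) ^ 2)

lemma relabel_mem_hull {m n : ℕ} (π : Fin m ≃ Fin n) {y : EuclideanSpace ℝ (Fin m)}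
    (hy : y ∈ convexHull ℝ (Set.range (regVertex m))) :
    relabel π y ∈ convexHull ℝ (Set.range (regVertex n)) := by
  rw [mem_hull_iff] at hy ⊢
  exact ⟨fun j => hy.1 _, by
    rw [show ∑ j, relabel π y j = ∑ j, y (π.symm j) from rfl,
      Equiv.sum_comp π.symm y]
    exact hy.2⟩

variable (heq : EquilateralFlat K R) (e : V ≃ V)
variable (he : ∀ σ : Finset V, σ ∈ K.faces ↔ σ.image e ∈ K.faces)

include he in
lemma img_face {σ : Finset V} (hσ : σ ∈ K.faces) : σ.image e ∈ K.faces := (he σ).1 hσ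

/-- The restriction of an automorphism to a face. -/
def eSub (σ : Finset V) : {v // v ∈ σ} ≃ {w // w ∈ σ.image e} where
  toFun p := ⟨e p.1, Finset.mem_image_of_mem e p.2⟩
  invFun q := ⟨e.symm q.1, by
    obtain ⟨v, hv, hve⟩ := Finset.mem_image.1 q.2
    rw [← hve]; simpa using hv⟩
  left_inv p := by ext; simp
  right_inv q := by ext; simp

/-- The induced permutation of chart indices. -/
noncomputable def permOf {σ : Finset V} (hσ : σ ∈ K.faces) :
    Fin σ.card ≃ Fin (σ.image e).card :=
  (vE K R heq hσ).symm.trans ((eSub e σ).trans (vE K R heq (img_face K e he hσ)))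

lemma permOf_idx {σ : Finset V} (hσ : σ ∈ K.faces) {v : V} (hv : v ∈ σ) :
    permOf K R heq e he hσ (idx K R heq hσ v hv)
      = idx K R heq (img_face K e he hσ) (e v) (Finset.mem_image_of_mem e hv) := by
  unfold permOf
  simp only [Equiv.trans_apply]
  have h1 : (vE K R heq hσ).symm (idx K R heq hσ v hv) = ⟨v, hv⟩ := by
    rw [Equiv.symm_apply_eq]
    rfl
  rw [h1]
  rfl

lemma permOf_symm_idx {σ : Finset V} (hσ : σ ∈ K.faces) {v : V} (hv : v ∈ σ)
    {h' : e v ∈ σ.image e} :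
    (permOf K R heq e he hσ).symm (idx K R heq (img_face K e he hσ) (e v) h')
      = idx K R heq hσ v hv := by
  rw [Equiv.symm_apply_eq, permOf_idx K R heq e he hσ hv]

/-- The self-map of `X` induced by the automorphism `e`. -/
noncomputable def Phi (x : X) : X :=
  Function.invFunOn (chart K R heq (img_face K e he (carrier_faces K R x)))
    (R.realize ((carrier K R x).image e))
    (relabel (permOf K R heq e he (carrier_faces K R x)) (chart K R heq (carrier_faces K R x) x))

lemma Phi_mem_spec (x : X) :
    Phi K R heq e he x ∈ R.realize ((carrier K R x).image e) ∧
    chart K R heq (img_face K e he (carrier_faces K R x)) (Phi K R heq e he x)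
      = relabel (permOf K R heq e he (carrier_faces K R x))
          (chart K R heq (carrier_faces K R x) x) := by
  have htarget := relabel_mem_hull (permOf K R heq e he (carrier_faces K R x))
    (chart_mem_hull K R heq (carrier_faces K R x) (carrier_mem_realize K R x))
  have hsurj := (chart_bijOn K R heq (img_face K e he (carrier_faces K R x))).surjOn htarget
  obtain ⟨z, hz, hze⟩ := hsurj
  exact ⟨Function.invFunOn_mem ⟨z, hz, hze⟩, Function.invFunOn_eq ⟨z, hz, hze⟩⟩

lemma Phi_vertexPt {v : V} (hv : {v} ∈ K.faces) :
    Phi K R heq e he (R.vertexPt v) = R.vertexPt (e v) := by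
  have hcar : carrier K R (R.vertexPt v) = {v} := by
    have h1 := carrier_min K R (R.vertexPt v) hv
      (by rw [R.realize_vertex v hv]; exact Set.mem_singleton _)
    have h2 := face_nonempty K (carrier_faces K R (R.vertexPt v))
    rcases Finset.subset_singleton_iff.1 h1 with h | h
    · exact absurd h h2
    · exact h
  have hmem := (Phi_mem_spec K R heq e he (R.vertexPt v)).1
  rw [hcar, Finset.image_singleton] at hmem
  have hev : {e v} ∈ K.faces := by
    have := (he {v}).1 hv
    rwa [Finset.image_singleton] at this
  rw [R.realize_vertex (e v) hev] at hmem
  exact hmem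

lemma chart_Phi {τ : Finset V} (hτ : τ ∈ K.faces) {x : X} (hx : x ∈ R.realize τ) :
    Phi K R heq e he x ∈ R.realize (τ.image e) ∧
    ∀ j, chart K R heq (img_face K e he hτ) (Phi K R heq e he x) j
      = chart K R heq hτ x ((permOf K R heq e he hτ).symm j) := by
  have hν : carrier K R x ∈ K.faces := carrier_faces K R x
  have hxν : x ∈ R.realize (carrier K R x) := carrier_mem_realize K R x
  have hsub : carrier K R x ⊆ τ := carrier_min K R x hτ hx
  have hsub' : (carrier K R x).image e ⊆ τ.image e := Finset.image_subset_image hsub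
  have hν' : (carrier K R x).image e ∈ K.faces := img_face K e he hν
  have hτ' : τ.image e ∈ K.faces := img_face K e he hτ
  have hPhimem := (Phi_mem_spec K R heq e he x).1
  have hPhichart := (Phi_mem_spec K R heq e he x).2
  have hmemτ' : Phi K R heq e he x ∈ R.realize (τ.image e) :=
    R.realize_mono _ hν' _ hτ' hsub' hPhimem
  refine ⟨hmemτ', ?_⟩
  intro j
  have hr1 := rigidity K R heq hν' hτ' hsub' hPhimem
  have hr2 := rigidity K R heq hν hτ hsub hxν
  obtain ⟨p, hp⟩ := (vE K R heq hτ').surjective j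
  obtain ⟨w, hwmem⟩ := p
  obtain ⟨v, hvτ, hve⟩ := Finset.mem_image.1 hwmem
  subst hve
  have hj : idx K R heq hτ' (e v) hwmem = j := hp
  by_cases hvν : v ∈ carrier K R x
  · have hq1 : e v ∈ (carrier K R x).image e := Finset.mem_image_of_mem e hvν
    have hL : chart K R heq hτ' (Phi K R heq e he x) j
        = chart K R heq hν' (Phi K R heq e he x) (idx K R heq hν' (e v) hq1) := by
      rw [← hj]
      exact hr1.1 (e v) hq1
    have hL2 : chart K R heq hν' (Phi K R heq e he x) (idx K R heq hν' (e v) hq1)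
        = chart K R heq hν x ((permOf K R heq e he hν).symm (idx K R heq hν' (e v) hq1)) := by
      rw [hPhichart]
      rfl
    have hL3 : (permOf K R heq e he hν).symm (idx K R heq hν' (e v) hq1)
        = idx K R heq hν v hvν := permOf_symm_idx K R heq e he hν hvν
    have hR1 : (permOf K R heq e he hτ).symm j = idx K R heq hτ v (hsub hvν) := by
      rw [← hj]
      exact permOf_symm_idx K R heq e he hτ (hsub hvν)
    rw [hL, hL2, hL3, hR1]
    exact (hr2.1 v hvν).symm
  · have hL0 : chart K R heq hτ' (Phi K R heq e he x) j = 0 := by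
      apply hr1.2 j
      intro u hu hju
      obtain ⟨z, hz, hze⟩ := Finset.mem_image.1 hu
      have hq1w : e v = u := by
        apply idx_injective K R heq hτ' hwmem (hsub' hu)
        rw [hj, hju]
      have hvz : v = z := e.injective (by rw [hq1w, ← hze])
      exact hvν (hvz ▸ hz)
    have hR1 : (permOf K R heq e he hτ).symm j = idx K R heq hτ v hvτ := by
      rw [← hj]
      exact permOf_symm_idx K R heq e he hτ hvτ
    have hR0 : chart K R heq hτ x (idx K R heq hτ v hvτ) = 0 := by
      apply hr2.2
      intro u hu hju
      exact hvν ((idx_injective K R heq hτ hvτ (hsub hu) hju) ▸ hu)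
    rw [hL0, hR1, hR0]

lemma Phi_dist {τ : Finset V} (hτ : τ ∈ K.faces) {x y : X} (hx : x ∈ R.realize τ)
    (hy : y ∈ R.realize τ) :
    dist (Phi K R heq e he x) (Phi K R heq e he y) = dist x y := by
  obtain ⟨hmx, hcx⟩ := chart_Phi K R heq e he hτ hx
  obtain ⟨hmy, hcy⟩ := chart_Phi K R heq e he hτ hy
  have hτ' : τ.image e ∈ K.faces := img_face K e he hτ
  have h1 : dist (Phi K R heq e he x) (Phi K R heq e he y)
      = dist (chart K R heq hτ' (Phi K R heq e he x))
          (chart K R heq hτ' (Phi K R heq e he y)) :=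
    (chart_dist K R heq hτ' hmx hmy).symm
  have hfx : chart K R heq hτ' (Phi K R heq e he x)
      = relabel (permOf K R heq e he hτ) (chart K R heq hτ x) := (WithLp.ext_iff 2).2 (funext fun j => hcx j)
  have hfy : chart K R heq hτ' (Phi K R heq e he y)
      = relabel (permOf K R heq e he hτ) (chart K R heq hτ y) := (WithLp.ext_iff 2).2 (funext fun j => hcy j)
  rw [h1, hfx, hfy, relabel_dist]
  exact chart_dist K R heq hτ hx hy

end PhiInfra

section NonExp

variable {V X : Type*} [DecidableEq V] [MetricSpace X] [Nonempty X]
variable (K : SimpComplex V) (R : MetricRealization K X)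

lemma near_common_face (x : X) : ∃ δ > 0, ∀ z : X, dist x z < δ →
    ∃ τ ∈ K.faces, x ∈ R.realize τ ∧ z ∈ R.realize τ := by
  classical
  set Y := ⋃ τ ∈ {τ | τ ∈ K.faces ∧ x ∉ R.realize τ}, R.realize τ with hY
  have hfin : ({τ | τ ∈ K.faces ∧ x ∉ R.realize τ} : Set (Finset V)).Finite :=
    K.finite.subset (fun τ hτ => hτ.1)
  have hclosed : IsClosed Y :=
    hfin.isClosed_biUnion (fun τ hτ => (R.realize_compact τ hτ.1).isClosed)
  have hxY : x ∉ Y := by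
    rw [hY]
    simp only [Set.mem_iUnion]
    rintro ⟨τ, ⟨hτf, hnx⟩, hxmem⟩
    exact hnx hxmem
  obtain ⟨δ, hδpos, hball⟩ := Metric.isOpen_iff.1 hclosed.isOpen_compl x hxY
  refine ⟨δ, hδpos, ?_⟩
  intro z hz
  have hzY : z ∉ Y := hball (show z ∈ Metric.ball x δ by rwa [Metric.mem_ball, dist_comm])
  obtain ⟨τ, hτ, hzτ⟩ := exists_face_mem K R z
  refine ⟨τ, hτ, ?_, hzτ⟩
  by_contra hxτ
  exact hzY (Set.mem_biUnion (show τ ∈ {τ | τ ∈ K.faces ∧ x ∉ R.realize τ} from ⟨hτ, hxτ⟩) hzτ)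

variable (heq : EquilateralFlat K R) (e : V ≃ V)
variable (he : ∀ σ : Finset V, σ ∈ K.faces ↔ σ.image e ∈ K.faces)

include he in
lemma Phi_nonexpansive (hcat : IsCAT 0 X) :
    ∀ x y : X, dist (Phi K R heq e he x) (Phi K R heq e he y) ≤ dist x y := by
  by_contra hcon
  push_neg at hcon
  obtain ⟨x, y, hgt⟩ := hcon
  classical
  set D := dist x y with hD
  obtain ⟨γ, hγ⟩ := hcat.1 x y (fun h => absurd h (lt_irrefl 0))
  set E := dist (Phi K R heq e he x) (Phi K R heq e he y) - D with hE
  have hEpos : 0 < E := sub_pos.mpr hgt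
  set step : ℝ × ℝ → ℝ × ℝ := fun p =>
    if (D + E) * ((p.1 + p.2)/2 - p.1)
        ≤ dist (Phi K R heq e he (γ p.1)) (Phi K R heq e he (γ ((p.1 + p.2)/2)))
    then (p.1, (p.1 + p.2)/2) else ((p.1 + p.2)/2, p.2) with hstep
  set I : ℕ → ℝ × ℝ := fun n => Nat.rec (motive := fun _ => ℝ × ℝ)
    ((0:ℝ), (1:ℝ)) (fun _ p => step p) n with hIdef
  have hI0 : I 0 = ((0:ℝ), (1:ℝ)) := rfl
  have hIsucc : ∀ n, I (n+1) = step (I n) := fun n => rfl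
  have hstep_cases : ∀ p : ℝ × ℝ, step p = (p.1, (p.1 + p.2)/2) ∨ step p = ((p.1 + p.2)/2, p.2) := by
    intro p
    rw [hstep]
    dsimp only
    split_ifs with h
    · exact Or.inl rfl
    · exact Or.inr rfl
  have hInv : ∀ n, 0 ≤ (I n).1 ∧ (I n).1 ≤ (I n).2 ∧ (I n).2 ≤ 1 ∧
      (I n).2 - (I n).1 = (2⁻¹:ℝ)^n ∧
      (D + E) * ((I n).2 - (I n).1)
        ≤ dist (Phi K R heq e he (γ (I n).1)) (Phi K R heq e he (γ (I n).2)) := by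
    intro n
    induction n with
    | zero =>
      have h0 : (I 0).1 = (0:ℝ) := rfl
      have h1 : (I 0).2 = (1:ℝ) := rfl
      rw [h0, h1]
      refine ⟨le_refl _, by norm_num, le_refl _, by norm_num, ?_⟩
      rw [hγ.1, hγ.2.1]
      have hr : (D + E) * ((1:ℝ) - 0) = D + E := by ring
      rw [hr]
      linarith [hE.le, hE.ge]
    | succ n ih =>
      obtain ⟨h0, h12, h21, hlen, hdist⟩ := ih
      have hm1 : (I n).1 ≤ ((I n).1 + (I n).2)/2 := by linarith
      have hm2 : ((I n).1 + (I n).2)/2 ≤ (I n).2 := by linarith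
      rw [hIsucc n, hstep]
      dsimp only
      split_ifs with hc
      · refine ⟨h0, hm1, le_trans hm2 h21, ?_, ?_⟩
        · show ((I n).1 + (I n).2)/2 - (I n).1 = (2⁻¹:ℝ)^(n+1)
          rw [pow_succ, ← hlen]
          ring
        · show (D + E) * (((I n).1 + (I n).2)/2 - (I n).1)
            ≤ dist (Phi K R heq e he (γ (I n).1)) (Phi K R heq e he (γ (((I n).1 + (I n).2)/2)))
          exact hc
      · refine ⟨le_trans h0 hm1, hm2, h21, ?_, ?_⟩
        · show (I n).2 - ((I n).1 + (I n).2)/2 = (2⁻¹:ℝ)^(n+1)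
          rw [pow_succ, ← hlen]
          ring
        · show (D + E) * ((I n).2 - ((I n).1 + (I n).2)/2)
            ≤ dist (Phi K R heq e he (γ (((I n).1 + (I n).2)/2))) (Phi K R heq e he (γ (I n).2))
          push_neg at hc
          have htri := dist_triangle (Phi K R heq e he (γ (I n).1))
            (Phi K R heq e he (γ (((I n).1 + (I n).2)/2))) (Phi K R heq e he (γ (I n).2))
          have hsplit2 : (D + E) * ((I n).2 - (I n).1)
              = (D + E) * (((I n).1 + (I n).2)/2 - (I n).1)
                + (D + E) * ((I n).2 - ((I n).1 + (I n).2)/2) := by ring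
          by_contra hcon2
          push_neg at hcon2
          have hfin : (D + E) * ((I n).2 - (I n).1)
              < (D + E) * ((I n).2 - (I n).1) := by
            calc (D + E) * ((I n).2 - (I n).1)
                ≤ dist (Phi K R heq e he (γ (I n).1)) (Phi K R heq e he (γ (I n).2)) := hdist
              _ ≤ dist (Phi K R heq e he (γ (I n).1))
                    (Phi K R heq e he (γ (((I n).1 + (I n).2)/2)))
                  + dist (Phi K R heq e he (γ (((I n).1 + (I n).2)/2)))
                    (Phi K R heq e he (γ (I n).2)) := htri
              _ < (D + E) * (((I n).1 + (I n).2)/2 - (I n).1)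
                  + (D + E) * ((I n).2 - ((I n).1 + (I n).2)/2) := by
                  exact add_lt_add_of_lt_of_le hc hcon2.le
              _ = (D + E) * ((I n).2 - (I n).1) := hsplit2.symm
          exact absurd hfin (lt_irrefl _)
  have hmono : ∀ n, (I n).1 ≤ (I (n+1)).1 ∧ (I (n+1)).2 ≤ (I n).2 := by
    intro n
    obtain ⟨h0, h12, h21, hlen, hdist⟩ := hInv n
    rcases hstep_cases (I n) with h | h
    · rw [hIsucc n, h]
      constructor
      · exact le_refl _
      · show ((I n).1 + (I n).2)/2 ≤ (I n).2
        linarith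
    · rw [hIsucc n, h]
      constructor
      · show (I n).1 ≤ ((I n).1 + (I n).2)/2
        linarith
      · exact le_refl _
  have ha : Monotone (fun n => (I n).1) := monotone_nat_of_le_succ (fun n => (hmono n).1)
  have hb : Antitone (fun n => (I n).2) := antitone_nat_of_succ_le (fun n => (hmono n).2)
  have hchain : ∀ p q : ℕ, (I p).1 ≤ (I q).2 := by
    intro p q
    rcases le_total p q with h | h
    · exact le_trans (ha h) (hInv q).2.1
    · exact le_trans (hInv p).2.1 (hb h)
  have hbdd : BddAbove (Set.range fun n => (I n).1) := by
    refine ⟨1, ?_⟩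
    rintro _ ⟨n, rfl⟩
    exact le_trans (hInv n).2.1 (hInv n).2.2.1
  set t := ⨆ n, (I n).1 with ht
  have htge : ∀ n, (I n).1 ≤ t := fun n => le_ciSup hbdd n
  have htle : ∀ n, t ≤ (I n).2 := fun n => ciSup_le (fun p => hchain p n)
  have ht0 : 0 ≤ t := le_trans (hInv 0).1 (htge 0)
  have ht1 : t ≤ 1 := le_trans (htle 0) (hInv 0).2.2.1
  have htmem : t ∈ Set.Icc (0:ℝ) 1 := ⟨ht0, ht1⟩
  obtain ⟨δ, hδ, hnear⟩ := near_common_face K R (γ t)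
  have hDnn : 0 ≤ D := dist_nonneg
  obtain ⟨n, hn⟩ : ∃ n : ℕ, (2⁻¹:ℝ)^n < δ / (D+1) := by
    obtain ⟨n, hn⟩ := exists_pow_lt_of_lt_one
      (div_pos hδ (show (0:ℝ) < D + 1 by linarith)) (by norm_num : (2⁻¹:ℝ) < 1)
    exact ⟨n, hn⟩
  obtain ⟨h0, h12, h21, hlen, hdist⟩ := hInv n
  have hamem : (I n).1 ∈ Set.Icc (0:ℝ) 1 := ⟨h0, le_trans h12 h21⟩
  have hbmem : (I n).2 ∈ Set.Icc (0:ℝ) 1 := ⟨le_trans h0 h12, h21⟩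
  have hta : t - (I n).1 ≤ (2⁻¹:ℝ)^n := by
    have := htle n
    linarith
  have hbt : (I n).2 - t ≤ (2⁻¹:ℝ)^n := by
    have := htge n
    linarith
  have hdta : dist (γ t) (γ (I n).1) = (t - (I n).1) * D := by
    rw [hγ.2.2 t htmem (I n).1 hamem, abs_of_nonneg (by linarith [htge n])]
  have hdtb : dist (γ t) (γ (I n).2) = ((I n).2 - t) * D := by
    rw [hγ.2.2 t htmem (I n).2 hbmem, abs_of_nonpos (by linarith [htle n])]
    ring
  have hbound : ∀ s : ℝ, 0 ≤ s → s ≤ (2⁻¹:ℝ)^n → s * D < δ := by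
    intro s hs1 hs2
    have h1 : s * D ≤ (2⁻¹:ℝ)^n * D := by
      apply mul_le_mul_of_nonneg_right hs2 hDnn
    have h2 : (2⁻¹:ℝ)^n * D < δ := by
      have h3 : (2⁻¹:ℝ)^n * D ≤ (2⁻¹:ℝ)^n * (D + 1) := by
        apply mul_le_mul_of_nonneg_left (by linarith) (by positivity)
      have h4 : (2⁻¹:ℝ)^n * (D + 1) < (δ / (D+1)) * (D+1) := by
        apply mul_lt_mul_of_pos_right hn (by linarith)
      rw [div_mul_cancel₀ _ (by linarith : D + 1 ≠ 0)] at h4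
      linarith
    linarith
  obtain ⟨τ₁, hτ₁, hm1t, hm1a⟩ := hnear (γ (I n).1)
    (by rw [hdta]; exact hbound _ (by linarith [htge n]) hta)
  obtain ⟨τ₂, hτ₂, hm2t, hm2b⟩ := hnear (γ (I n).2)
    (by rw [hdtb]; exact hbound _ (by linarith [htle n]) hbt)
  have hd1 : dist (Phi K R heq e he (γ (I n).1)) (Phi K R heq e he (γ t))
      = dist (γ (I n).1) (γ t) := Phi_dist K R heq e he hτ₁ hm1a hm1t
  have hd2 : dist (Phi K R heq e he (γ t)) (Phi K R heq e he (γ (I n).2))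
      = dist (γ t) (γ (I n).2) := Phi_dist K R heq e he hτ₂ hm2t hm2b
  have htri := dist_triangle (Phi K R heq e he (γ (I n).1)) (Phi K R heq e he (γ t))
    (Phi K R heq e he (γ (I n).2))
  rw [hd1, hd2] at htri
  have hsum : dist (γ (I n).1) (γ t) + dist (γ t) (γ (I n).2) = ((I n).2 - (I n).1) * D := by
    rw [dist_comm (γ (I n).1) (γ t), hdta, hdtb]
    ring
  rw [hsum] at htri
  have hba : (0:ℝ) < (I n).2 - (I n).1 := by
    rw [hlen]
    positivity
  nlinarith [hdist, htri, hEpos, hba]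

end NonExp

section EndgameLemmas

variable {V X : Type*} [DecidableEq V] [MetricSpace X] [Nonempty X]
variable (K : SimpComplex V) (R : MetricRealization K X)
variable (heq : EquilateralFlat K R)

include heq in
/-- A point equidistant from all vertices is the barycenter of any face containing it. -/
lemma center_face_sq {c : X}
    (hcd : ∀ u w : V, {u} ∈ K.faces → {w} ∈ K.faces →
      dist c (R.vertexPt u) = dist c (R.vertexPt w))
    {σ : Finset V} (hσ : σ ∈ K.faces) (hcσ : c ∈ R.realize σ) :
    ∀ v : V, v ∈ σ → dist c (R.vertexPt v) ^ 2 = 2⁻¹ - (2 * (σ.card : ℝ))⁻¹ := by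
  intro v hv
  have hconstσ : ∀ u : V, ∀ hu : u ∈ σ, ∀ w : V, ∀ hw : w ∈ σ,
      chart K R heq hσ c (idx K R heq hσ u hu) = chart K R heq hσ c (idx K R heq hσ w hw) := by
    intro u hu w hw
    have h1 := chart_dist_vertex_sq K R heq hσ hcσ hu
    have h2 := chart_dist_vertex_sq K R heq hσ hcσ hw
    have h3 : dist c (R.vertexPt u) = dist c (R.vertexPt w) :=
      hcd u w (face_vertex_mem K hσ hu) (face_vertex_mem K hσ hw)
    have h4 : Real.sqrt 2 * chart K R heq hσ c (idx K R heq hσ u hu)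
        = Real.sqrt 2 * chart K R heq hσ c (idx K R heq hσ w hw) := by
      rw [h3] at h1
      linarith
    exact mul_left_cancel₀ sqrt_two_pos.ne' h4
  have hconstj : ∀ j : Fin σ.card,
      chart K R heq hσ c j = chart K R heq hσ c (idx K R heq hσ v hv) := by
    intro j
    obtain ⟨p, hp⟩ := (vE K R heq hσ).surjective j
    rw [← hp]
    exact hconstσ p.1 p.2 v hv
  have hsum := chart_sum K R heq hσ hcσ
  have hcardpos : (0:ℝ) < (σ.card : ℝ) := by
    have : 0 < σ.card := Finset.card_pos.mpr (Finset.nonempty_iff_ne_empty.mpr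
      (face_nonempty K hσ))
    exact_mod_cast this
  have hval : chart K R heq hσ c (idx K R heq hσ v hv)
      = (Real.sqrt 2)⁻¹ / (σ.card : ℝ) := by
    have hsc : ∑ j, chart K R heq hσ c j
        = (σ.card : ℝ) * chart K R heq hσ c (idx K R heq hσ v hv) := by
      rw [Finset.sum_congr rfl (fun j _ => hconstj j), Finset.sum_const, Finset.card_univ,
        Fintype.card_fin, nsmul_eq_mul]
    rw [hsc] at hsum
    rw [eq_div_iff hcardpos.ne']
    linarith [hsum]
  have hA : ∑ j, chart K R heq hσ c j ^ 2
      = (σ.card : ℝ) * ((Real.sqrt 2)⁻¹ / (σ.card : ℝ)) ^ 2 := by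
    rw [Finset.sum_congr rfl (fun j _ => by rw [hconstj j, hval]), Finset.sum_const,
      Finset.card_univ, Fintype.card_fin, nsmul_eq_mul]
  have hdsq := chart_dist_vertex_sq K R heq hσ hcσ hv
  rw [hA, hval] at hdsq
  rw [hdsq]
  have h1 : Real.sqrt 2 * (Real.sqrt 2)⁻¹ = 1 := mul_inv_cancel₀ sqrt_two_pos.ne'
  rw [div_pow, inv_sqrt_two_sq]
  rw [show Real.sqrt 2 * ((Real.sqrt 2)⁻¹ / (σ.card : ℝ))
    = (Real.sqrt 2 * (Real.sqrt 2)⁻¹) / (σ.card : ℝ) from by ring, h1]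
  field_simp
  ring

include heq in
/-- A vertex whose star misses the center would be too far from it. -/
lemma exit_false (hcat : IsCAT 0 X) {c : X} {r : ℝ} (hrnn : 0 ≤ r)
    (hrlt : r < (Real.sqrt 2)⁻¹) {v : V} (hvf : {v} ∈ K.faces)
    (hDc : dist (R.vertexPt v) c = r)
    (hcase : ∀ τ ∈ K.faces, v ∈ τ → c ∉ R.realize τ) : False := by
  classical
  obtain ⟨γ, hγ⟩ := hcat.1 (R.vertexPt v) c (fun h => absurd h (lt_irrefl 0))
  set SV := ⋃ τ ∈ {τ : Finset V | τ ∈ K.faces ∧ v ∈ τ}, R.realize τ with hSV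
  have hSVfin : {τ : Finset V | τ ∈ K.faces ∧ v ∈ τ}.Finite :=
    K.finite.subset (fun τ h => h.1)
  have hSVclosed : IsClosed SV :=
    hSVfin.isClosed_biUnion (fun τ h => (R.realize_compact τ h.1).isClosed)
  set YV := ⋃ τ ∈ {τ : Finset V | τ ∈ K.faces ∧ v ∉ τ}, R.realize τ with hYV
  have hYVfin : {τ : Finset V | τ ∈ K.faces ∧ v ∉ τ}.Finite :=
    K.finite.subset (fun τ h => h.1)
  have hYVclosed : IsClosed YV :=
    hYVfin.isClosed_biUnion (fun τ h => (R.realize_compact τ h.1).isClosed)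
  set A := {s : ℝ | s ∈ Set.Icc (0:ℝ) 1 ∧ γ s ∈ SV} with hA
  have h0A : (0:ℝ) ∈ A := by
    refine ⟨⟨le_refl 0, by norm_num⟩, ?_⟩
    rw [hγ.1]
    refine Set.mem_biUnion (show {v} ∈ {τ : Finset V | τ ∈ K.faces ∧ v ∈ τ} from
      ⟨hvf, Finset.mem_singleton_self v⟩) ?_
    rw [R.realize_vertex v hvf]
    exact Set.mem_singleton _
  have hAbdd : BddAbove A := ⟨1, fun s hs => hs.1.2⟩
  set t0 := sSup A with ht0
  have ht0nn : 0 ≤ t0 := le_csSup hAbdd h0A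
  have ht0le : t0 ≤ 1 := csSup_le ⟨0, h0A⟩ (fun s hs => hs.1.2)
  have hgd : ∀ s ∈ Set.Icc (0:ℝ) 1, ∀ u ∈ Set.Icc (0:ℝ) 1,
      dist (γ s) (γ u) = |s - u| * r := by
    intro s hs u hu
    rw [hγ.2.2 s hs u hu, hDc]
  have hγt0 : γ t0 ∈ SV := by
    have hcl : γ t0 ∈ closure SV := by
      rw [Metric.mem_closure_iff]
      intro ε hε
      have hrp : (0:ℝ) < r + 1 := by linarith
      obtain ⟨s, hsA, hst⟩ := exists_lt_of_lt_csSup ⟨0, h0A⟩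
        (show t0 - ε/(r+1) < t0 by
          have : 0 < ε/(r+1) := div_pos hε hrp
          linarith)
      refine ⟨γ s, hsA.2, ?_⟩
      have hsle : s ≤ t0 := le_csSup hAbdd hsA
      rw [hgd t0 ⟨ht0nn, ht0le⟩ s hsA.1, abs_of_nonneg (by linarith)]
      have h1 : (t0 - s) * r ≤ (ε/(r+1)) * r :=
        mul_le_mul_of_nonneg_right (by linarith) hrnn
      have h2 : (ε/(r+1)) * r < ε := by
        rw [div_mul_eq_mul_div, div_lt_iff₀ hrp]
        nlinarith
      linarith
    rwa [hSVclosed.closure_eq] at hcl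
  rw [hSV, Set.mem_iUnion₂] at hγt0
  obtain ⟨τ, hτS, hγτ⟩ := hγt0
  have ht0lt : t0 < 1 := by
    rcases lt_or_eq_of_le ht0le with h | h
    · exact h
    · exfalso
      rw [h, hγ.2.1] at hγτ
      exact hcase τ hτS.1 hτS.2 hγτ
  have hγt0Y : γ t0 ∈ YV := by
    have hcl : γ t0 ∈ closure YV := by
      rw [Metric.mem_closure_iff]
      intro ε hε
      have hrp : (0:ℝ) < r + 1 := by linarith
      set s := min 1 (t0 + ε/(r+1)) with hs
      have hsgt : t0 < s := by
        rw [hs]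
        apply lt_min ht0lt
        have : 0 < ε/(r+1) := div_pos hε hrp
        linarith
      have hsle1 : s ≤ 1 := min_le_left _ _
      have hs0 : 0 ≤ s := le_trans ht0nn hsgt.le
      have hsdiff : s - t0 ≤ ε/(r+1) := by
        rw [hs]
        have := min_le_right 1 (t0 + ε/(r+1))
        linarith
      have hsnotA : s ∉ A := fun hsA => absurd (le_csSup hAbdd hsA) (not_le.mpr hsgt)
      have hsY : γ s ∈ YV := by
        obtain ⟨τ', hτ', hγsτ'⟩ := exists_face_mem K R (γ s)
        have hvτ' : v ∉ τ' := by
          intro hvin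
          exact hsnotA ⟨⟨hs0, hsle1⟩, Set.mem_biUnion
            (show τ' ∈ {τ : Finset V | τ ∈ K.faces ∧ v ∈ τ} from ⟨hτ', hvin⟩) hγsτ'⟩
        exact Set.mem_biUnion (show τ' ∈ {τ : Finset V | τ ∈ K.faces ∧ v ∉ τ} from
          ⟨hτ', hvτ'⟩) hγsτ'
      refine ⟨γ s, hsY, ?_⟩
      rw [hgd t0 ⟨ht0nn, ht0le⟩ s ⟨hs0, hsle1⟩, abs_of_nonpos (by linarith), neg_sub]
      have h1 : (s - t0) * r ≤ (ε/(r+1)) * r := mul_le_mul_of_nonneg_right hsdiff hrnn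
      have h2 : (ε/(r+1)) * r < ε := by
        rw [div_mul_eq_mul_div, div_lt_iff₀ hrp]
        nlinarith
      linarith
    rwa [hYVclosed.closure_eq] at hcl
  rw [hYV, Set.mem_iUnion₂] at hγt0Y
  obtain ⟨τ', hτ'S, hγτ'⟩ := hγt0Y
  have hpint : γ t0 ∈ R.realize (τ ∩ τ') := by
    rw [← R.realize_inter τ hτS.1 τ' hτ'S.1]
    exact ⟨hγτ, hγτ'⟩
  have hne : τ ∩ τ' ≠ ∅ := by
    intro h
    rw [h, R.realize_empty] at hpint
    exact hpint
  have hρf : τ ∩ τ' ∈ K.faces := K.down_closed τ hτS.1 _ Finset.inter_subset_left hne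
  have hvnotρ : v ∉ τ ∩ τ' := fun h => hτ'S.2 (Finset.mem_inter.1 h).2
  have hrig := rigidity K R heq hρf hτS.1 Finset.inter_subset_left hpint
  have hcoord : chart K R heq hτS.1 (γ t0) (idx K R heq hτS.1 v hτS.2) = 0 := by
    apply hrig.2
    intro u hu hju
    exact hvnotρ ((idx_injective K R heq hτS.1 hτS.2 (Finset.inter_subset_left hu) hju) ▸ hu)
  have hz0τ : R.vertexPt v ∈ R.realize τ := vertexPt_mem_realize K R hτS.1 hτS.2
  have hge : (Real.sqrt 2)⁻¹ ≤ dist (R.vertexPt v) (γ t0) := by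
    rw [← chart_dist K R heq hτS.1 hz0τ hγτ, chart_vertexPt K R heq hτS.1 hτS.2]
    have hcd2 := coord_le_dist (regVertex τ.card (idx K R heq hτS.1 v hτS.2))
      (chart K R heq hτS.1 (γ t0)) (idx K R heq hτS.1 v hτS.2)
    rw [regVertex_apply, if_pos rfl, hcoord, sub_zero] at hcd2
    rwa [abs_of_nonneg (by positivity)] at hcd2
  have hle3 : dist (R.vertexPt v) (γ t0) ≤ r := by
    have h1 := hγ.2.2 0 ⟨le_refl 0, by norm_num⟩ t0 ⟨ht0nn, ht0le⟩
    rw [hγ.1, hDc] at h1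
    rw [h1, abs_of_nonpos (by linarith), neg_sub, sub_zero]
    nlinarith
  linarith

end EndgameLemmas

set_option maxHeartbeats 2000000 in
/-- Every vertex-transitive intrinsic simplicial complex that is CAT(0)
with the equilateral flat metric is a single simplex. -/
theorem vertex_transitive_cat0_equilateral_is_simplex {V X : Type*} [DecidableEq V]
    [MetricSpace X] [Nonempty X] (K : SimpComplex V) (R : MetricRealization K X)
    (heq : EquilateralFlat K R) (hcat : IsCAT 0 X) (htrans : VertexTransitive K) :
    ∃ σ ∈ K.faces, ∀ τ : Finset V, τ ∈ K.faces ↔ τ ≠ ∅ ∧ τ ⊆ σ := by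
  classical
  -- the finite set of vertices
  set T : Finset V := K.finite.toFinset.biUnion id with hT
  have hTvert : ∀ v : V, v ∈ T ↔ {v} ∈ K.faces := by
    intro v
    constructor
    · intro hv
      obtain ⟨σ, hσ, hvσ⟩ := Finset.mem_biUnion.1 hv
      exact face_vertex_mem K (K.finite.mem_toFinset.1 hσ) hvσ
    · intro hv
      exact Finset.mem_biUnion.2 ⟨{v}, K.finite.mem_toFinset.2 hv, Finset.mem_singleton_self v⟩
  have hTne : T.Nonempty := by
    obtain ⟨σ, hσ, _⟩ := exists_face_mem K R (Classical.arbitrary X)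
    obtain ⟨v, hv⟩ := Finset.nonempty_iff_ne_empty.2 (face_nonempty K hσ)
    exact ⟨v, Finset.mem_biUnion.2 ⟨σ, K.finite.mem_toFinset.2 hσ, hv⟩⟩
  -- compactness
  have hcs : CompactSpace X := ⟨by
    rw [← R.realize_cover]
    exact K.finite.isCompact_biUnion (fun σ hσ => R.realize_compact σ hσ)⟩
  -- the circumradius function
  set f : X → ℝ := fun z => T.sup' hTne (fun v => dist z (R.vertexPt v)) with hf
  have hlip : ∀ z w : X, f z ≤ f w + dist z w := by
    intro z w
    apply Finset.sup'_le
    intro v hv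
    have h1 : dist w (R.vertexPt v) ≤ f w := Finset.le_sup' (fun v => dist w (R.vertexPt v)) hv
    calc dist z (R.vertexPt v) ≤ dist z w + dist w (R.vertexPt v) := dist_triangle _ _ _
      _ ≤ f w + dist z w := by linarith
  have hcont : Continuous f := by
    refine LipschitzWith.continuous (K := 1) (LipschitzWith.of_dist_le_mul ?_)
    intro z w
    rw [Real.dist_eq, NNReal.coe_one, one_mul, abs_sub_le_iff]
    constructor
    · linarith [hlip z w]
    · have := hlip w z
      rw [dist_comm w z] at this
      linarith
  obtain ⟨c, -, hminOn⟩ := isCompact_univ.exists_isMinOn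
    ⟨Classical.arbitrary X, Set.mem_univ _⟩ hcont.continuousOn
  have hmin : ∀ z : X, f c ≤ f z := fun z => hminOn (Set.mem_univ z)
  -- CN inequality for midpoints
  have hCN : ∀ c₁ c₂ : X, ∃ m : X, ∀ z : X,
      dist z m ^ 2 ≤ dist z c₁ ^ 2 / 2 + dist z c₂ ^ 2 / 2 - dist c₁ c₂ ^ 2 / 4 := by
    intro c₁ c₂
    obtain ⟨γ, hγ⟩ := hcat.1 c₁ c₂ (fun h => absurd h (lt_irrefl 0))
    refine ⟨γ (1/2), ?_⟩
    intro z
    have hcomp := hcat.2 c₁ c₂ z γ hγ (fun h => absurd h (lt_irrefl 0)) (1/2) (by norm_num)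
    rw [cmpDist_zero] at hcomp
    have hval : dist c₁ z ^ 2 + (1/2:ℝ) ^ 2 * dist c₁ c₂ ^ 2
        - (1/2) * (dist c₁ z ^ 2 + dist c₁ c₂ ^ 2 - dist c₂ z ^ 2)
        = dist c₂ z ^ 2 / 2 + dist c₁ z ^ 2 / 2 - dist c₁ c₂ ^ 2 / 4 := by ring
    rw [hval] at hcomp
    have htri : dist c₁ c₂ ≤ dist c₁ z + dist c₂ z := by
      rw [dist_comm c₂ z]
      exact dist_triangle _ _ _
    have hnn : (0:ℝ) ≤ dist c₂ z ^ 2 / 2 + dist c₁ z ^ 2 / 2 - dist c₁ c₂ ^ 2 / 4 := by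
      nlinarith [sq_nonneg (dist c₁ z - dist c₂ z), dist_nonneg (x := c₁) (y := c₂)]
    have hsq := Real.sq_sqrt hnn
    have hzd : dist z c₁ = dist c₁ z := dist_comm _ _
    have hzd2 : dist z c₂ = dist c₂ z := dist_comm _ _
    rw [hzd, hzd2]
    have hdd : dist z (γ (1/2)) ^ 2
        ≤ Real.sqrt (dist c₂ z ^ 2 / 2 + dist c₁ z ^ 2 / 2 - dist c₁ c₂ ^ 2 / 4) ^ 2 :=
      pow_le_pow_left₀ dist_nonneg hcomp 2
    rw [hsq] at hdd
    linarith
  -- uniqueness of the minimizer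
  have hfnn : 0 ≤ f c := by
    obtain ⟨v, hv⟩ := hTne
    exact le_trans dist_nonneg (Finset.le_sup' (fun v => dist c (R.vertexPt v)) hv)
  have huniq : ∀ c' : X, f c' ≤ f c → c' = c := by
    intro c' hle
    by_contra hne
    obtain ⟨m, hm⟩ := hCN c c'
    obtain ⟨v₀, hv₀, hfm⟩ := Finset.exists_mem_eq_sup' hTne (fun v => dist m (R.vertexPt v))
    have hdc : 0 < dist c c' := dist_pos.mpr (fun h => hne h.symm)
    have h1 := hm (R.vertexPt v₀)
    have h2 : dist (R.vertexPt v₀) c ≤ f c := by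
      rw [dist_comm]
      exact Finset.le_sup' (fun v => dist c (R.vertexPt v)) hv₀
    have h3 : dist (R.vertexPt v₀) c' ≤ f c := by
      rw [dist_comm]
      exact le_trans (Finset.le_sup' (fun v => dist c' (R.vertexPt v)) hv₀) hle
    have h4 : dist (R.vertexPt v₀) m ^ 2 < f c ^ 2 := by
      nlinarith [dist_nonneg (x := R.vertexPt v₀) (y := c),
        dist_nonneg (x := R.vertexPt v₀) (y := c')]
    have h5 : f m < f c := by
      have hfm2 : f m = dist m (R.vertexPt v₀) := hfm
      rw [hfm2, dist_comm m (R.vertexPt v₀)]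
      exact lt_of_pow_lt_pow_left₀ 2 hfnn h4
    exact absurd (hmin m) (not_le.mpr h5)
  -- the distances from the center to all vertices agree
  have hle2 : ∀ v ∈ T, ∀ w ∈ T, dist c (R.vertexPt w) ≤ dist c (R.vertexPt v) := by
    intro v hv w hw
    obtain ⟨e, he, hev⟩ := htrans v w ((hTvert v).1 hv) ((hTvert w).1 hw)
    have hnonexp := Phi_nonexpansive K R heq e he hcat
    have hfix : f (Phi K R heq e he c) ≤ f c := by
      apply Finset.sup'_le
      intro u hu
      have huf : {u} ∈ K.faces := (hTvert u).1 hu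
      have hupre : {e.symm u} ∈ K.faces := by
        have h := he {e.symm u}
        rw [Finset.image_singleton, Equiv.apply_symm_apply] at h
        exact h.2 huf
      have hPu : Phi K R heq e he (R.vertexPt (e.symm u)) = R.vertexPt u := by
        rw [Phi_vertexPt K R heq e he hupre, Equiv.apply_symm_apply]
      calc dist (Phi K R heq e he c) (R.vertexPt u)
          = dist (Phi K R heq e he c) (Phi K R heq e he (R.vertexPt (e.symm u))) := by rw [hPu]
        _ ≤ dist c (R.vertexPt (e.symm u)) := hnonexp _ _
        _ ≤ f c := Finset.le_sup' (fun v => dist c (R.vertexPt v)) ((hTvert (e.symm u)).2 hupre)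
    have hΦc : Phi K R heq e he c = c := huniq _ hfix
    calc dist c (R.vertexPt w)
        = dist (Phi K R heq e he c) (Phi K R heq e he (R.vertexPt v)) := by
          rw [hΦc, Phi_vertexPt K R heq e he ((hTvert v).1 hv), hev]
      _ ≤ dist c (R.vertexPt v) := hnonexp _ _
  have hconst : ∀ v ∈ T, ∀ w ∈ T, dist c (R.vertexPt w) = dist c (R.vertexPt v) :=
    fun v hv w hw => le_antisymm (hle2 v hv w hw) (hle2 w hw v hv)
  have hcd : ∀ u w : V, {u} ∈ K.faces → {w} ∈ K.faces →
      dist c (R.vertexPt u) = dist c (R.vertexPt w) := by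
    intro u w hu hw
    exact hconst w ((hTvert w).2 hw) u ((hTvert u).2 hu)
  have hbary : ∀ σ : Finset V, ∀ hσ : σ ∈ K.faces, c ∈ R.realize σ → ∀ v : V, ∀ hv : v ∈ σ,
      dist c (R.vertexPt v) ^ 2 = 2⁻¹ - (2 * (σ.card : ℝ))⁻¹ := by
    intro σ hσ hcσ v hv
    exact center_face_sq K R heq hcd hσ hcσ v hv
  -- the face containing the center
  obtain ⟨σs, hσs, hcs2⟩ := exists_face_mem K R c
  obtain ⟨vs, hvs⟩ := Finset.nonempty_iff_ne_empty.2 (face_nonempty K hσs)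
  set r := dist c (R.vertexPt vs) with hr
  have hvsT : vs ∈ T := (hTvert vs).2 (face_vertex_mem K hσs hvs)
  have hrall : ∀ v ∈ T, dist c (R.vertexPt v) = r := fun v hv => hconst vs hvsT v hv
  have hrsq : r ^ 2 = 2⁻¹ - (2 * (σs.card : ℝ))⁻¹ := hbary σs hσs hcs2 vs hvs
  have hrnn : 0 ≤ r := dist_nonneg
  have hrlt : r < (Real.sqrt 2)⁻¹ := by
    have hcardpos : (0:ℝ) < (σs.card : ℝ) := by
      have : 0 < σs.card := Finset.card_pos.mpr (Finset.nonempty_iff_ne_empty.mpr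
        (face_nonempty K hσs))
      exact_mod_cast this
    have h2 : r ^ 2 < ((Real.sqrt 2)⁻¹) ^ 2 := by
      rw [hrsq, inv_sqrt_two_sq]
      have : 0 < (2 * (σs.card : ℝ))⁻¹ := by positivity
      linarith
    exact lt_of_pow_lt_pow_left₀ 2 (by positivity) h2
  -- uniqueness of the face containing the center
  have hfaceuniq : ∀ τ ∈ K.faces, c ∈ R.realize τ → τ = σs := by
    intro τ hτ hcτ
    obtain ⟨u, hu⟩ := Finset.nonempty_iff_ne_empty.2 (face_nonempty K hτ)
    have huT : u ∈ T := (hTvert u).2 (face_vertex_mem K hτ hu)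
    have h1 : r ^ 2 = 2⁻¹ - (2 * (τ.card : ℝ))⁻¹ := by
      rw [← hrall u huT]
      exact hbary τ hτ hcτ u hu
    have hcint : c ∈ R.realize (σs ∩ τ) := by
      rw [← R.realize_inter σs hσs τ hτ]
      exact ⟨hcs2, hcτ⟩
    have hne : σs ∩ τ ≠ ∅ := by
      intro h
      rw [h, R.realize_empty] at hcint
      exact hcint
    have hfint : σs ∩ τ ∈ K.faces := K.down_closed σs hσs _ Finset.inter_subset_left hne
    obtain ⟨u2, hu2⟩ := Finset.nonempty_iff_ne_empty.2 hne
    have hu2T : u2 ∈ T := (hTvert u2).2 (face_vertex_mem K hfint hu2)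
    have h2 : r ^ 2 = 2⁻¹ - (2 * ((σs ∩ τ).card : ℝ))⁻¹ := by
      rw [← hrall u2 hu2T]
      exact hbary _ hfint hcint u2 hu2
    have hcards : ∀ m1 m2 : ℕ, 0 < m1 → 0 < m2 →
        (2⁻¹ - (2 * (m1:ℝ))⁻¹ = 2⁻¹ - (2 * (m2:ℝ))⁻¹) → m1 = m2 := by
      intro m1 m2 hm1 hm2 hmeq
      have hm1' : (0:ℝ) < (m1:ℝ) := by exact_mod_cast hm1
      have hm2' : (0:ℝ) < (m2:ℝ) := by exact_mod_cast hm2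
      have : (2 * (m1:ℝ))⁻¹ = (2 * (m2:ℝ))⁻¹ := by linarith
      have h3 : (2 * (m1:ℝ)) = (2 * (m2:ℝ)) := by
        have := inv_injective this
        exact this
      have : (m1:ℝ) = (m2:ℝ) := by linarith
      exact_mod_cast this
    have hcpos : 0 < τ.card := Finset.card_pos.mpr (Finset.nonempty_iff_ne_empty.mpr
      (face_nonempty K hτ))
    have hspos : 0 < σs.card := Finset.card_pos.mpr (Finset.nonempty_iff_ne_empty.mpr
      (face_nonempty K hσs))
    have hipos : 0 < (σs ∩ τ).card := Finset.card_pos.mpr (Finset.nonempty_iff_ne_empty.mpr hne)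
    have hcard1 : τ.card = σs.card := hcards _ _ hcpos hspos (by rw [← h1, ← hrsq])
    have hcard2 : (σs ∩ τ).card = σs.card := hcards _ _ hipos hspos (by rw [← h2, ← hrsq])
    have hss : σs ∩ τ = σs :=
      Finset.eq_of_subset_of_card_le Finset.inter_subset_left (le_of_eq hcard2.symm)
    have hsub : σs ⊆ τ := by
      intro a ha
      have : a ∈ σs ∩ τ := by rw [hss]; exact ha
      exact (Finset.mem_inter.1 this).2
    exact (Finset.eq_of_subset_of_card_le hsub (le_of_eq hcard1)).symm
  -- every vertex lies in that face
  have hvertin : ∀ v ∈ T, v ∈ σs := by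
    intro v hv
    by_cases hcase : ∃ τ ∈ K.faces, v ∈ τ ∧ c ∈ R.realize τ
    · obtain ⟨τ, hτ, hvτ, hcτ⟩ := hcase
      exact hfaceuniq τ hτ hcτ ▸ hvτ
    · exfalso
      push_neg at hcase
      exact exit_false K R heq hcat hrnn hrlt ((hTvert v).1 hv)
        (by rw [dist_comm]; exact hrall v hv) hcase
  -- conclusion
  refine ⟨σs, hσs, ?_⟩
  intro τ
  constructor
  · intro hτ
    refine ⟨face_nonempty K hτ, ?_⟩
    intro a ha
    exact hvertin a ((hTvert a).2 (face_vertex_mem K hτ ha))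
  · rintro ⟨hne, hsub⟩
    exact K.down_closed σs hσs τ hsub hne
end MGC
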